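/- arXiv:2212.09933 — 5 statements merged into one kernel-verified Lean document; each statement's English description precedes it below -/
import Mathlib

section
/- For every n ≥ 2 there is no family (f_x)_{x ∈ L^n_n} assigning an outcome f_x to every maximal isotropic subspace x of (ZMod 2)^{2n} such that all pairs of outcomes in the family are consistent. In other words, L^n admits no hidden variable assignment that is both complete and consistent. -/
open Finset

abbrev F2 := ZMod 2
/-- `F2^{2n}`, split into the first and last `n` coordinates. -/
abbrev PV (n : ℕ) := (Fin n → F2) × (Fin n → F2)

/-- Symplectic product on `F2^{2n}`: zero iff `a₁·b₂ = a₂·b₁`. -/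
def symp {n : ℕ} (a b : PV n) : F2 :=
  (∑ i, a.1 i * b.2 i) + (∑ i, a.2 i * b.1 i)

/-- A subspace is isotropic if the symplectic product vanishes on it. -/
def IsIsotropic {n : ℕ} (S : Submodule F2 (PV n)) : Prop :=
  ∀ x ∈ S, ∀ y ∈ S, symp x y = 0

/-- `Lset n k` = `L^n_k`, the set of `k`-dimensional isotropic subspaces of `F2^{2n}`. -/
def Lset (n k : ℕ) : Set (Submodule F2 (PV n)) :=
  {S | IsIsotropic S ∧ Module.finrank F2 S = k}

/-- Integer lift of a vector over `F2`, with values in `{0,1} ⊆ ℤ`. -/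
def liftZ {n : ℕ} (v : Fin n → F2) : Fin n → ℤ := fun i => ((v i).val : ℤ)

def dotZ {n : ℕ} (a b : Fin n → ℤ) : ℤ := ∑ i, a i * b i

/-- The phase `i^{x̂₁·x̂₂} · i^{ŷ₁·ŷ₂} · i^{−((x+y)^^₁·(x+y)^^₂)} · (−1)^{x̂₂·ŷ₁}`. -/
noncomputable def phase {n : ℕ} (x y : PV n) : ℂ :=
  Complex.I ^ (dotZ (liftZ x.1) (liftZ x.2)) *
  Complex.I ^ (dotZ (liftZ y.1) (liftZ y.2)) *
  Complex.I ^ (-(dotZ (liftZ (x + y).1) (liftZ (x + y).2))) *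
  (-1 : ℂ) ^ (dotZ (liftZ x.2) (liftZ y.1))

/-- `w(x,y) ∈ {0,1} ⊆ F2`: zero iff the phase equals `1`. -/
noncomputable def wght {n : ℕ} (x y : PV n) : F2 :=
  if phase x y = 1 then 0 else 1

/-- An outcome of an isotropic subspace `S` is `f : S → F2` with
`f(x+y) = f(x)+f(y)+w(x,y)`. -/
def IsOutcome {n : ℕ} (S : Submodule F2 (PV n)) (f : S → F2) : Prop :=
  ∀ x y : S, f (x + y) = f x + f y + wght (x : PV n) (y : PV n)

/-- Two outcomes are consistent if they agree on the intersection of their domains. -/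
def ConsistentOn {n : ℕ} {S₁ S₂ : Submodule F2 (PV n)} (f₁ : S₁ → F2) (f₂ : S₂ → F2) : Prop :=
  ∀ v (h1 : v ∈ S₁) (h2 : v ∈ S₂), f₁ ⟨v, h1⟩ = f₂ ⟨v, h2⟩

namespace MerminAux

variable {n : ℕ}


variable {n : ℕ}

lemma f2_cases (a : F2) : a = 0 ∨ a = 1 := by revert a; decide

lemma symp_add_left (x y z : PV n) : symp (x + y) z = symp x z + symp y z := by
  simp only [symp, Prod.fst_add, Prod.snd_add, Pi.add_apply, add_mul, Finset.sum_add_distrib]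
  ring

lemma symp_add_right (x y z : PV n) : symp x (y + z) = symp x y + symp x z := by
  simp only [symp, Prod.fst_add, Prod.snd_add, Pi.add_apply, mul_add, Finset.sum_add_distrib]
  ring

lemma symp_zero_left (z : PV n) : symp 0 z = 0 := by simp [symp]

lemma symp_zero_right (z : PV n) : symp z 0 = 0 := by simp [symp]

lemma symp_smul_left (a : F2) (x z : PV n) : symp (a • x) z = a * symp x z := by
  rcases f2_cases a with h | h <;> subst h <;> simp [symp_zero_left]

lemma symp_smul_right (a : F2) (x z : PV n) : symp z (a • x) = a * symp z x := by
  rcases f2_cases a with h | h <;> subst h <;> simp [symp_zero_right]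

lemma isIsotropic_span (s : Set (PV n)) (h : ∀ x ∈ s, ∀ y ∈ s, symp x y = 0) :
    IsIsotropic (Submodule.span F2 s) := by
  have H1 : ∀ y ∈ s, ∀ x, x ∈ Submodule.span F2 s → symp x y = 0 := by
    intro y hy x hx
    induction hx using Submodule.span_induction with
    | mem x hxs => exact h x hxs y hy
    | zero => exact symp_zero_left y
    | add u v _ _ hu hv => rw [symp_add_left, hu, hv, add_zero]
    | smul a u _ hu => rw [symp_smul_left, hu, mul_zero]
  intro x hx y hy
  induction hy using Submodule.span_induction with
  | mem y hys => exact H1 y hys x hx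
  | zero => exact symp_zero_right x
  | add u v _ _ hu hv => rw [symp_add_right, hu, hv, add_zero]
  | smul a u _ hu => rw [symp_smul_right, hu, mul_zero]



variable {n : ℕ}

lemma dF_single_left (j : Fin n) (v : Fin n → F2) :
    ∑ i, (Pi.single j 1 : Fin n → F2) i * v i = v j := by
  rw [Finset.sum_eq_single j]
  · rw [Pi.single_eq_same, one_mul]
  · intro i _ hij
    rw [Pi.single_eq_of_ne hij, zero_mul]
  · intro h; exact absurd (Finset.mem_univ j) h

lemma dF_single_right (j : Fin n) (v : Fin n → F2) :
    ∑ i, v i * (Pi.single j 1 : Fin n → F2) i = v j := by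
  rw [Finset.sum_eq_single j]
  · rw [Pi.single_eq_same, mul_one]
  · intro i _ hij
    rw [Pi.single_eq_of_ne hij, mul_zero]
  · intro h; exact absurd (Finset.mem_univ j) h

lemma liftZ_zero : liftZ (0 : Fin n → F2) = 0 := by
  funext i; simp [liftZ]

lemma val_one : (((1:F2).val : ℤ)) = 1 := rfl
lemma val_zero : (((0:F2).val : ℤ)) = 0 := rfl

lemma liftZ_single (j : Fin n) : liftZ (Pi.single j (1:F2)) = Pi.single j (1:ℤ) := by
  funext i
  by_cases h : i = j
  · subst h; show (((Pi.single i 1 : Fin n → F2) i).val : ℤ) = _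
    rw [Pi.single_eq_same, Pi.single_eq_same]; rfl
  · show (((Pi.single j 1 : Fin n → F2) i).val : ℤ) = _
    rw [Pi.single_eq_of_ne h, Pi.single_eq_of_ne h]; rfl

lemma liftZ_single_add {i0 i1 : Fin n} (h : i0 ≠ i1) :
    liftZ (Pi.single i0 (1:F2) + Pi.single i1 (1:F2)) =
      Pi.single i0 (1:ℤ) + Pi.single i1 (1:ℤ) := by
  funext i
  show ((((Pi.single i0 1 : Fin n → F2) i + (Pi.single i1 1 : Fin n → F2) i)).val : ℤ) = _
  by_cases h0 : i = i0
  · subst h0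
    simp only [Pi.add_apply, Pi.single_eq_same, Pi.single_eq_of_ne h, add_zero]
    rfl
  · by_cases h1 : i = i1
    · subst h1
      simp only [Pi.add_apply, Pi.single_eq_same, Pi.single_eq_of_ne h0, zero_add]
      rfl
    · simp only [Pi.add_apply, Pi.single_eq_of_ne h0, Pi.single_eq_of_ne h1, add_zero]
      rfl

lemma dotZ_zero_left (v : Fin n → ℤ) : dotZ 0 v = 0 := by simp [dotZ]
lemma dotZ_zero_right (v : Fin n → ℤ) : dotZ v 0 = 0 := by simp [dotZ]

lemma dotZ_single_left (j : Fin n) (v : Fin n → ℤ) : dotZ (Pi.single j 1) v = v j := by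
  rw [dotZ, Finset.sum_eq_single j]
  · rw [Pi.single_eq_same, one_mul]
  · intro i _ hij
    rw [Pi.single_eq_of_ne hij, zero_mul]
  · intro h; exact absurd (Finset.mem_univ j) h

lemma dotZ_add_left (u v w : Fin n → ℤ) : dotZ (u + v) w = dotZ u w + dotZ v w := by
  simp [dotZ, add_mul, Finset.sum_add_distrib]

lemma dotZ_add_right (u v w : Fin n → ℤ) : dotZ u (v + w) = dotZ u v + dotZ u w := by
  simp [dotZ, mul_add, Finset.sum_add_distrib]


variable {n : ℕ}








variable {i0 i1 : Fin n}

lemma d_s0_s1 (h : i0 ≠ i1) :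
    dotZ (liftZ (Pi.single i0 (1:F2))) (liftZ (Pi.single i1 (1:F2))) = 0 := by
  rw [liftZ_single, liftZ_single, dotZ_single_left, Pi.single_eq_of_ne h]

lemma d_s1_s1 :
    dotZ (liftZ (Pi.single i1 (1:F2))) (liftZ (Pi.single i1 (1:F2))) = 1 := by
  rw [liftZ_single, dotZ_single_left, Pi.single_eq_same]

lemma d_ss (h : i0 ≠ i1) :
    dotZ (liftZ (Pi.single i0 (1:F2) + Pi.single i1 (1:F2)))
      (liftZ (Pi.single i0 (1:F2) + Pi.single i1 (1:F2))) = 2 := by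
  rw [liftZ_single_add h, dotZ_add_left, dotZ_single_left, dotZ_single_left]
  simp [Pi.single_eq_same, Pi.single_eq_of_ne h, Pi.single_eq_of_ne h.symm]

lemma I_neg_two : Complex.I ^ (-(2:ℤ)) = -1 := by
  rw [zpow_neg]
  norm_num [zpow_ofNat]

lemma w_row1 (h : i0 ≠ i1) :
    wght ((Pi.single i0 1, 0) : PV n) ((Pi.single i1 1, 0) : PV n) = 0 := by
  rw [wght, if_pos]
  rw [phase]
  simp only [Prod.mk_add_mk, add_zero, liftZ_zero, dotZ_zero_left, dotZ_zero_right,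
    neg_zero, zpow_zero, one_mul, mul_one]

lemma w_row2 (h : i0 ≠ i1) :
    wght ((0, Pi.single i0 1) : PV n) ((0, Pi.single i1 1) : PV n) = 0 := by
  rw [wght, if_pos]
  rw [phase]
  simp only [Prod.mk_add_mk, add_zero, zero_add, liftZ_zero, dotZ_zero_left, dotZ_zero_right,
    neg_zero, zpow_zero, one_mul, mul_one]

lemma w_row3 (h : i0 ≠ i1) :
    wght ((Pi.single i0 1, Pi.single i1 1) : PV n)
         ((Pi.single i1 1, Pi.single i0 1) : PV n) = 0 := by
  rw [wght, if_pos]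
  rw [phase]
  have e1 : (Pi.single i1 1 : Fin n → F2) + Pi.single i0 1 = Pi.single i0 1 + Pi.single i1 1 :=
    add_comm _ _
  simp only [Prod.mk_add_mk, e1]
  rw [d_s0_s1 h, d_ss h, d_s1_s1]
  have e2 : dotZ (liftZ (Pi.single i1 (1:F2))) (liftZ (Pi.single i0 (1:F2))) = 0 := by
    rw [liftZ_single, liftZ_single, dotZ_single_left, Pi.single_eq_of_ne h.symm]
  rw [e2, I_neg_two]
  norm_num

lemma w_col1 (h : i0 ≠ i1) :
    wght ((Pi.single i0 1, 0) : PV n) ((0, Pi.single i1 1) : PV n) = 0 := by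
  rw [wght, if_pos]
  rw [phase]
  simp only [Prod.mk_add_mk, add_zero, zero_add, liftZ_zero, dotZ_zero_left, dotZ_zero_right]
  rw [d_s0_s1 h]
  norm_num

lemma w_col2 (h : i0 ≠ i1) :
    wght ((Pi.single i1 1, 0) : PV n) ((0, Pi.single i0 1) : PV n) = 0 := by
  rw [wght, if_pos]
  rw [phase]
  simp only [Prod.mk_add_mk, add_zero, zero_add, liftZ_zero, dotZ_zero_left, dotZ_zero_right]
  have e2 : dotZ (liftZ (Pi.single i1 (1:F2))) (liftZ (Pi.single i0 (1:F2))) = 0 := by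
    rw [liftZ_single, liftZ_single, dotZ_single_left, Pi.single_eq_of_ne h.symm]
  rw [e2]
  norm_num

lemma w_col3 (h : i0 ≠ i1) :
    wght ((Pi.single i0 1 + Pi.single i1 1, 0) : PV n)
         ((0, Pi.single i0 1 + Pi.single i1 1) : PV n) = 1 := by
  rw [wght, if_neg]
  rw [phase]
  simp only [Prod.mk_add_mk, add_zero, zero_add, liftZ_zero, dotZ_zero_left, dotZ_zero_right]
  rw [d_ss h, I_neg_two]
  norm_num

variable {n : ℕ}


def tailV (j : Fin n) : PV n := (0, Pi.single j 1)

def ctxV (a b : PV n) : Fin n → PV n := fun i =>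
  if i.val = 0 then a else if i.val = 1 then b else tailV i

def ctxS (a b : PV n) : Submodule F2 (PV n) :=
  Submodule.span F2 (Set.range (ctxV a b))

lemma mem_ctxS_left (hn : 2 ≤ n) (a b : PV n) : a ∈ ctxS a b := by
  apply Submodule.subset_span
  exact ⟨⟨0, by omega⟩, by simp [ctxV]⟩

lemma mem_ctxS_right (hn : 2 ≤ n) (a b : PV n) : b ∈ ctxS a b := by
  apply Submodule.subset_span
  exact ⟨⟨1, by omega⟩, by simp [ctxV]⟩

lemma symp_self (x : PV n) : symp x x = 0 := by
  have : ∀ i, x.2 i * x.1 i = x.1 i * x.2 i := fun i => mul_comm _ _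
  rw [symp, Finset.sum_congr rfl (fun i _ => this i)]
  exact CharTwo.add_self_eq_zero _

lemma symp_comm (x y : PV n) : symp x y = symp y x := by
  rw [symp, symp, add_comm]
  congr 1 <;> exact Finset.sum_congr rfl (fun i _ => mul_comm _ _)

lemma symp_tail (x : PV n) (j : Fin n) (hx : x.1 j = 0) : symp x (tailV j) = 0 := by
  rw [symp]
  have h1 : ∀ i ∈ Finset.univ, x.2 i * (tailV j).1 i = 0 := by
    intro i _; simp [tailV]
  rw [Finset.sum_congr rfl h1, Finset.sum_const_zero, add_zero]
  show ∑ i, x.1 i * (Pi.single j 1 : Fin n → F2) i = 0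
  rw [Finset.sum_eq_single j]
  · rw [Pi.single_eq_same, mul_one]; exact hx
  · intro i _ hij; rw [Pi.single_eq_of_ne hij, mul_zero]
  · intro h; exact absurd (Finset.mem_univ j) h

def p1 (k : Fin n) : PV n →ₗ[F2] F2 := (LinearMap.proj k).comp (LinearMap.fst F2 _ _)
def p2 (k : Fin n) : PV n →ₗ[F2] F2 := (LinearMap.proj k).comp (LinearMap.snd F2 _ _)

@[simp] lemma p1_apply (k : Fin n) (x : PV n) : p1 k x = x.1 k := rfl
@[simp] lemma p2_apply (k : Fin n) (x : PV n) : p2 k x = x.2 k := rfl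

lemma ctxV_at0 (a b : PV n) (i : Fin n) (h : i.val = 0) : ctxV a b i = a := if_pos h
lemma ctxV_at1 (a b : PV n) (i : Fin n) (h0 : ¬ i.val = 0) (h1 : i.val = 1) :
    ctxV a b i = b := by unfold ctxV; rw [if_neg h0, if_pos h1]
lemma ctxV_tail (a b : PV n) (i : Fin n) (h0 : ¬ i.val = 0) (h1 : ¬ i.val = 1) :
    ctxV a b i = tailV i := by unfold ctxV; rw [if_neg h0, if_neg h1]

lemma ctxV_cases (a b : PV n) (i : Fin n) :
    (ctxV a b i = a ∧ i.val = 0) ∨ (ctxV a b i = b ∧ i.val = 1) ∨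
      (ctxV a b i = tailV i ∧ 2 ≤ i.val) := by
  by_cases h0 : i.val = 0
  · exact Or.inl ⟨ctxV_at0 a b i h0, h0⟩
  · by_cases h1 : i.val = 1
    · exact Or.inr (Or.inl ⟨ctxV_at1 a b i h0 h1, h1⟩)
    · exact Or.inr (Or.inr ⟨ctxV_tail a b i h0 h1, by omega⟩)

lemma single_ne_val {i k : Fin n} (h : ¬ i.val = k.val) : (Pi.single i 1 : Fin n → F2) k = 0 := by
  apply Pi.single_eq_of_ne
  intro hh
  exact h (by rw [hh])

lemma ctx_mem (hn : 2 ≤ n) (a b : PV n)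
    (hsupp : ∀ j : Fin n, 2 ≤ j.val →
       a.1 j = 0 ∧ a.2 j = 0 ∧ b.1 j = 0 ∧ b.2 j = 0)
    (hab : symp a b = 0)
    (φa φb : PV n →ₗ[F2] F2)
    (hφaa : φa a = 1) (hφab : φa b = 0) (hφba : φb a = 0) (hφbb : φb b = 1)
    (hφat : ∀ j : Fin n, 2 ≤ j.val → φa (tailV j) = 0)
    (hφbt : ∀ j : Fin n, 2 ≤ j.val → φb (tailV j) = 0) :
    ctxS a b ∈ Lset n n := by
  have hba : symp b a = 0 := (symp_comm b a).trans hab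
  constructor
  · -- isotropic
    apply isIsotropic_span
    rintro x ⟨i, rfl⟩ y ⟨j, rfl⟩
    have hat : ∀ k : Fin n, 2 ≤ k.val → symp a (tailV k) = 0 :=
      fun k hk => symp_tail a k (hsupp k hk).1
    have hbt : ∀ k : Fin n, 2 ≤ k.val → symp b (tailV k) = 0 :=
      fun k hk => symp_tail b k (hsupp k hk).2.2.1
    rcases ctxV_cases a b i with ⟨hi, hi2⟩ | ⟨hi, hi2⟩ | ⟨hi, hi2⟩ <;>
      rcases ctxV_cases a b j with ⟨hj, hj2⟩ | ⟨hj, hj2⟩ | ⟨hj, hj2⟩ <;> rw [hi, hj]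
    · exact symp_self a
    · exact hab
    · exact hat j hj2
    · exact hba
    · exact symp_self b
    · exact hbt j hj2
    · exact (symp_comm _ _).trans (hat i hi2)
    · exact (symp_comm _ _).trans (hbt i hi2)
    · exact symp_tail _ _ rfl
  · -- finrank
    have hli : LinearIndependent F2 (ctxV a b) := by
      set Φ : PV n →ₗ[F2] (Fin n → F2) :=
        LinearMap.pi (fun k => if k.val = 0 then φa else if k.val = 1 then φb else p2 k) with hΦ
      apply LinearIndependent.of_comp Φ
      have hΦ0 : ∀ (x : PV n) (k : Fin n), k.val = 0 → Φ x k = φa x := by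
        intro x k hk; rw [hΦ, LinearMap.pi_apply, if_pos hk]
      have hΦ1 : ∀ (x : PV n) (k : Fin n), ¬ k.val = 0 → k.val = 1 → Φ x k = φb x := by
        intro x k hk0 hk1; rw [hΦ, LinearMap.pi_apply, if_neg hk0, if_pos hk1]
      have hΦ2 : ∀ (x : PV n) (k : Fin n), ¬ k.val = 0 → ¬ k.val = 1 → Φ x k = x.2 k := by
        intro x k hk0 hk1; rw [hΦ, LinearMap.pi_apply, if_neg hk0, if_neg hk1]; rfl
      have heq : ⇑Φ ∘ ctxV a b = fun i => (Pi.single i 1 : Fin n → F2) := by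
        funext i
        funext k
        show Φ (ctxV a b i) k = (Pi.single i 1 : Fin n → F2) k
        by_cases hk0 : k.val = 0
        · rw [hΦ0 _ _ hk0]
          rcases ctxV_cases a b i with ⟨hi, hi2⟩ | ⟨hi, hi2⟩ | ⟨hi, hi2⟩ <;> rw [hi]
          · rw [hφaa]
            have : i = k := Fin.ext (by omega)
            rw [this, Pi.single_eq_same]
          · rw [hφab, single_ne_val (by omega)]
          · rw [hφat i hi2, single_ne_val (by omega)]
        · by_cases hk1 : k.val = 1
          · rw [hΦ1 _ _ hk0 hk1]
            rcases ctxV_cases a b i with ⟨hi, hi2⟩ | ⟨hi, hi2⟩ | ⟨hi, hi2⟩ <;> rw [hi]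
            · rw [hφba, single_ne_val (by omega)]
            · rw [hφbb]
              have : i = k := Fin.ext (by omega)
              rw [this, Pi.single_eq_same]
            · rw [hφbt i hi2, single_ne_val (by omega)]
          · rw [hΦ2 _ _ hk0 hk1]
            rcases ctxV_cases a b i with ⟨hi, hi2⟩ | ⟨hi, hi2⟩ | ⟨hi, hi2⟩ <;> rw [hi]
            · rw [(hsupp k (by omega)).2.1, single_ne_val (by omega)]
            · rw [(hsupp k (by omega)).2.2.2, single_ne_val (by omega)]
            · rfl
      rw [heq]
      have hb := (Pi.basisFun F2 (Fin n)).linearIndependent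
      have hbeq : ⇑(Pi.basisFun F2 (Fin n)) = fun i => (Pi.single i 1 : Fin n → F2) := by
        funext i; exact Pi.basisFun_apply F2 (Fin n) i
      rwa [hbeq] at hb
    rw [ctxS, finrank_span_eq_card hli, Fintype.card_fin]


end MerminAux

/-- For every `n ≥ 2`, there is no family assigning an outcome to every maximal isotropic
subspace of `F2^{2n}` such that all pairs of outcomes are consistent. -/
theorem no_complete_consistent_assignment :
    ∀ n : ℕ, 2 ≤ n →
      ¬ ∃ f : (S : Submodule F2 (PV n)) → (S → F2),
          (∀ S ∈ Lset n n, IsOutcome S (f S)) ∧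
          (∀ S₁ ∈ Lset n n, ∀ S₂ ∈ Lset n n, ConsistentOn (f S₁) (f S₂)) := by
  intro n hn
  rintro ⟨f, hout, hcons⟩
  open MerminAux in
  · set i0 : Fin n := ⟨0, by omega⟩ with hi0def
    set i1 : Fin n := ⟨1, by omega⟩ with hi1def
    have hi0 : i0.val = 0 := rfl
    have hi1 : i1.val = 1 := rfl
    have h01 : i0 ≠ i1 := by
      intro h
      have := congrArg Fin.val h
      rw [hi0, hi1] at this
      omega
    set s0 : Fin n → F2 := Pi.single i0 1 with hs0def
    set s1 : Fin n → F2 := Pi.single i1 1 with hs1def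
    -- component vanishing off the first two coordinates
    have hv0 : ∀ j : Fin n, 2 ≤ j.val → (0 : Fin n → F2) j = 0 := fun _ _ => rfl
    have hvs0 : ∀ j : Fin n, 2 ≤ j.val → s0 j = 0 := fun j hj => single_ne_val (by omega)
    have hvs1 : ∀ j : Fin n, 2 ≤ j.val → s1 j = 0 := fun j hj => single_ne_val (by omega)
    have hvss : ∀ j : Fin n, 2 ≤ j.val → (s0 + s1) j = 0 := by
      intro j hj
      rw [Pi.add_apply, hvs0 j hj, hvs1 j hj, add_zero]
    -- values at the first two coordinates
    have hv00 : s0 i0 = 1 := Pi.single_eq_same _ _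
    have hv01 : s0 i1 = 0 := single_ne_val (by omega)
    have hv10 : s1 i0 = 0 := single_ne_val (by omega)
    have hv11 : s1 i1 = 1 := Pi.single_eq_same _ _
    -- the nine entries of the Mermin square
    set E11 : PV n := (s0, 0) with hE11
    set E12 : PV n := (s1, 0) with hE12
    set E13 : PV n := (s0 + s1, 0) with hE13
    set E21 : PV n := (0, s1) with hE21
    set E22 : PV n := (0, s0) with hE22
    set E23 : PV n := (0, s0 + s1) with hE23
    set E31 : PV n := (s0, s1) with hE31
    set E32 : PV n := (s1, s0) with hE32
    set E33 : PV n := (s0 + s1, s0 + s1) with hE33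
    -- sum identities
    have h13 : E11 + E12 = E13 := by
      show ((s0, (0:Fin n → F2)) : PV n) + (s1, 0) = (s0 + s1, 0)
      rw [Prod.mk_add_mk, add_zero]
    have h23 : E21 + E22 = E23 := by
      show (((0:Fin n → F2), s1) : PV n) + (0, s0) = (0, s0 + s1)
      rw [Prod.mk_add_mk, add_zero, add_comm s1 s0]
    have h33r : E31 + E32 = E33 := by
      show ((s0, s1) : PV n) + (s1, s0) = (s0 + s1, s0 + s1)
      rw [Prod.mk_add_mk, add_comm s1 s0]
    have h33c : E13 + E23 = E33 := by
      show ((s0 + s1, (0:Fin n → F2)) : PV n) + (0, s0 + s1) = (s0 + s1, s0 + s1)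
      rw [Prod.mk_add_mk, add_zero, zero_add]
    have hc31 : E11 + E21 = E31 := by
      show ((s0, (0:Fin n → F2)) : PV n) + (0, s1) = (s0, s1)
      rw [Prod.mk_add_mk, add_zero, zero_add]
    have hc32 : E12 + E22 = E32 := by
      show ((s1, (0:Fin n → F2)) : PV n) + (0, s0) = (s1, s0)
      rw [Prod.mk_add_mk, add_zero, zero_add]
    -- the six contexts
    set R1 := ctxS E11 E12 with hR1def
    set R2 := ctxS E21 E22 with hR2def
    set R3 := ctxS E31 E32 with hR3def
    set C1 := ctxS E11 E21 with hC1def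
    set C2 := ctxS E12 E22 with hC2def
    set C3 := ctxS E13 E23 with hC3def
    -- each context is a maximal isotropic subspace
    have hR1 : R1 ∈ Lset n n := by
      apply ctx_mem hn E11 E12 (fun j hj => ⟨hvs0 j hj, hv0 j hj, hvs1 j hj, hv0 j hj⟩)
        ?_ (p1 i0) (p1 i1)
      · show s0 i0 = 1; exact hv00
      · show s1 i0 = 0; exact hv10
      · show s0 i1 = 0; exact hv01
      · show s1 i1 = 1; exact hv11
      · intro j hj; rfl
      · intro j hj; rfl
      · show (∑ i, s0 i * (0:Fin n → F2) i) + (∑ i, (0:Fin n → F2) i * s1 i) = 0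
        simp
    have hR2 : R2 ∈ Lset n n := by
      apply ctx_mem hn E21 E22 (fun j hj => ⟨hv0 j hj, hvs1 j hj, hv0 j hj, hvs0 j hj⟩)
        ?_ (p2 i1) (p2 i0)
      · show s1 i1 = 1; exact hv11
      · show s0 i1 = 0; exact hv01
      · show s1 i0 = 0; exact hv10
      · show s0 i0 = 1; exact hv00
      · intro j hj; show (Pi.single j 1 : Fin n → F2) i1 = 0; exact single_ne_val (by omega)
      · intro j hj; show (Pi.single j 1 : Fin n → F2) i0 = 0; exact single_ne_val (by omega)
      · show (∑ i, (0:Fin n → F2) i * s0 i) + (∑ i, s1 i * (0:Fin n → F2) i) = 0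
        simp
    have hR3 : R3 ∈ Lset n n := by
      apply ctx_mem hn E31 E32 (fun j hj => ⟨hvs0 j hj, hvs1 j hj, hvs1 j hj, hvs0 j hj⟩)
        ?_ (p1 i0) (p1 i1)
      · show s0 i0 = 1; exact hv00
      · show s1 i0 = 0; exact hv10
      · show s0 i1 = 0; exact hv01
      · show s1 i1 = 1; exact hv11
      · intro j hj; rfl
      · intro j hj; rfl
      · show (∑ i, s0 i * s0 i) + (∑ i, s1 i * s1 i) = 0
        rw [hs0def, hs1def, dF_single_left, dF_single_left, Pi.single_eq_same,
          Pi.single_eq_same]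
        decide
    have hC1 : C1 ∈ Lset n n := by
      apply ctx_mem hn E11 E21 (fun j hj => ⟨hvs0 j hj, hv0 j hj, hv0 j hj, hvs1 j hj⟩)
        ?_ (p1 i0) (p2 i1)
      · show s0 i0 = 1; exact hv00
      · show (0:Fin n → F2) i0 = 0; rfl
      · show (0:Fin n → F2) i1 = 0; rfl
      · show s1 i1 = 1; exact hv11
      · intro j hj; rfl
      · intro j hj; show (Pi.single j 1 : Fin n → F2) i1 = 0; exact single_ne_val (by omega)
      · show (∑ i, s0 i * s1 i) + (∑ i, (0:Fin n → F2) i * (0:Fin n → F2) i) = 0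
        rw [hs0def, dF_single_left]
        simp [hv10]
    have hC2 : C2 ∈ Lset n n := by
      apply ctx_mem hn E12 E22 (fun j hj => ⟨hvs1 j hj, hv0 j hj, hv0 j hj, hvs0 j hj⟩)
        ?_ (p1 i1) (p2 i0)
      · show s1 i1 = 1; exact hv11
      · show (0:Fin n → F2) i1 = 0; rfl
      · show (0:Fin n → F2) i0 = 0; rfl
      · show s0 i0 = 1; exact hv00
      · intro j hj; rfl
      · intro j hj; show (Pi.single j 1 :  Fin n → F2) i0 = 0; exact single_ne_val (by omega)
      · show (∑ i, s1 i * s0 i) + (∑ i, (0:Fin n → F2) i * (0:Fin n → F2) i) = 0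
        rw [hs1def, dF_single_left]
        simp [hv01]
    have hC3 : C3 ∈ Lset n n := by
      apply ctx_mem hn E13 E23 (fun j hj => ⟨hvss j hj, hv0 j hj, hv0 j hj, hvss j hj⟩)
        ?_ (p1 i0) (p2 i0)
      · show (s0 + s1) i0 = 1
        rw [Pi.add_apply, hv00, hv10, add_zero]
      · show (0:Fin n → F2) i0 = 0; rfl
      · show (0:Fin n → F2) i0 = 0; rfl
      · show (s0 + s1) i0 = 1
        rw [Pi.add_apply, hv00, hv10, add_zero]
      · intro j hj; rfl
      · intro j hj; show (Pi.single j 1 : Fin n → F2) i0 = 0; exact single_ne_val (by omega)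
      · show (∑ i, (s0 + s1) i * (s0 + s1) i) + (∑ i, (0:Fin n → F2) i * (0:Fin n → F2) i) = 0
        have : ∀ i, (s0 + s1) i * (s0 + s1) i = s0 i * (s0 + s1) i + s1 i * (s0 + s1) i := by
          intro i; rw [Pi.add_apply]; ring
        rw [Finset.sum_congr rfl (fun i _ => this i), Finset.sum_add_distrib]
        rw [hs0def, hs1def, dF_single_left, dF_single_left]
        simp only [Pi.add_apply, ← hs0def, ← hs1def, hv00, hv01, hv10, hv11]
        norm_num
        decide
    -- memberships
    have m111 : E11 ∈ R1 := mem_ctxS_left hn _ _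
    have m121 : E12 ∈ R1 := mem_ctxS_right hn _ _
    have m131 : E13 ∈ R1 := h13 ▸ add_mem m111 m121
    have m212 : E21 ∈ R2 := mem_ctxS_left hn _ _
    have m222 : E22 ∈ R2 := mem_ctxS_right hn _ _
    have m232 : E23 ∈ R2 := h23 ▸ add_mem m212 m222
    have m313 : E31 ∈ R3 := mem_ctxS_left hn _ _
    have m323 : E32 ∈ R3 := mem_ctxS_right hn _ _
    have m333 : E33 ∈ R3 := h33r ▸ add_mem m313 m323
    have m11c : E11 ∈ C1 := mem_ctxS_left hn _ _
    have m21c : E21 ∈ C1 := mem_ctxS_right hn _ _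
    have m31c : E31 ∈ C1 := hc31 ▸ add_mem m11c m21c
    have m12c : E12 ∈ C2 := mem_ctxS_left hn _ _
    have m22c : E22 ∈ C2 := mem_ctxS_right hn _ _
    have m32c : E32 ∈ C2 := hc32 ▸ add_mem m12c m22c
    have m13c : E13 ∈ C3 := mem_ctxS_left hn _ _
    have m23c : E23 ∈ C3 := mem_ctxS_right hn _ _
    have m33c : E33 ∈ C3 := h33c ▸ add_mem m13c m23c
    -- the w-values
    have w1 : wght E11 E12 = 0 := w_row1 h01
    have w2 : wght E21 E22 = 0 := w_row2 h01.symm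
    have w3 : wght E31 E32 = 0 := w_row3 h01
    have w4 : wght E11 E21 = 0 := w_col1 h01
    have w5 : wght E12 E22 = 0 := w_col2 h01
    have w6 : wght E13 E23 = 1 := w_col3 h01
    -- outcome equations
    have o1 := hout R1 hR1 ⟨E11, m111⟩ ⟨E12, m121⟩
    rw [show (⟨E11, m111⟩ + ⟨E12, m121⟩ : R1) = ⟨E13, m131⟩ from Subtype.ext h13, w1] at o1
    have o2 := hout R2 hR2 ⟨E21, m212⟩ ⟨E22, m222⟩
    rw [show (⟨E21, m212⟩ + ⟨E22, m222⟩ : R2) = ⟨E23, m232⟩ from Subtype.ext h23, w2] at o2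
    have o3 := hout R3 hR3 ⟨E31, m313⟩ ⟨E32, m323⟩
    rw [show (⟨E31, m313⟩ + ⟨E32, m323⟩ : R3) = ⟨E33, m333⟩ from Subtype.ext h33r, w3] at o3
    have o4 := hout C1 hC1 ⟨E11, m11c⟩ ⟨E21, m21c⟩
    rw [show (⟨E11, m11c⟩ + ⟨E21, m21c⟩ : C1) = ⟨E31, m31c⟩ from Subtype.ext hc31, w4] at o4
    have o5 := hout C2 hC2 ⟨E12, m12c⟩ ⟨E22, m22c⟩
    rw [show (⟨E12, m12c⟩ + ⟨E22, m22c⟩ : C2) = ⟨E32, m32c⟩ from Subtype.ext hc32, w5] at o5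
    have o6 := hout C3 hC3 ⟨E13, m13c⟩ ⟨E23, m23c⟩
    rw [show (⟨E13, m13c⟩ + ⟨E23, m23c⟩ : C3) = ⟨E33, m33c⟩ from Subtype.ext h33c, w6] at o6
    -- consistency equations
    have c11 := hcons R1 hR1 C1 hC1 E11 m111 m11c
    have c12 := hcons R1 hR1 C2 hC2 E12 m121 m12c
    have c13 := hcons R1 hR1 C3 hC3 E13 m131 m13c
    have c21 := hcons R2 hR2 C1 hC1 E21 m212 m21c
    have c22 := hcons R2 hR2 C2 hC2 E22 m222 m22c
    have c23 := hcons R2 hR2 C3 hC3 E23 m232 m23c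
    have c31 := hcons R3 hR3 C1 hC1 E31 m313 m31c
    have c32 := hcons R3 hR3 C2 hC2 E32 m323 m32c
    have c33 := hcons R3 hR3 C3 hC3 E33 m333 m33c
    have contra : (0 : F2) = 1 := by
      linear_combination o1 + o2 - o3 - o4 - o5 + o6 + c11 + c12 - c13 + c21 + c22 - c23
        - c31 - c32 + c33
    exact zero_ne_one contra
end

section
/- Pval(L^2) = 4/5. Concretely: among the 15 maximal (2-dimensional) isotropic subspaces of (ZMod 2)^4, the maximum size of a subset D admitting a pairwise consistent family of outcomes (f_x)_{x∈D} is exactly 12. -/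
open Finset

/-! ### Auxiliary machinery -/

set_option synthInstance.maxSize 8000
set_option maxHeartbeats 4000000

/-- Computable version of `wght`. -/
def wB {n : ℕ} (x y : PV n) : F2 :=
  if (dotZ (liftZ x.1) (liftZ x.2) + dotZ (liftZ y.1) (liftZ y.2)
      - dotZ (liftZ (x + y).1) (liftZ (x + y).2) + 2 * dotZ (liftZ x.2) (liftZ y.1)) % 4 = 0
  then 0 else 1

lemma I_zpow_eq_one_iff (e : ℤ) : Complex.I ^ e = 1 ↔ e % 4 = 0 := by
  have hI := Complex.I_ne_zero
  have e1 : Complex.I ^ (2 : ℤ) = -1 := by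
    rw [show (2 : ℤ) = ((2 : ℕ) : ℤ) from rfl, zpow_natCast, Complex.I_sq]
  have h4 : Complex.I ^ ((4 : ℤ) * (e / 4)) = 1 := by
    rw [zpow_mul, show (4 : ℤ) = ((4 : ℕ) : ℤ) from rfl, zpow_natCast, Complex.I_pow_four,
      one_zpow]
  constructor
  · intro h
    rw [show e = 4 * (e / 4) + e % 4 from (Int.mul_ediv_add_emod e 4).symm, zpow_add₀ hI, h4,
      one_mul] at h
    have h0 : 0 ≤ e % 4 := Int.emod_nonneg e (by norm_num)
    have h3 : e % 4 < 4 := Int.emod_lt_of_pos e (by norm_num)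
    rcases (by omega : e % 4 = 0 ∨ e % 4 = 1 ∨ e % 4 = 2 ∨ e % 4 = 3) with hr | hr | hr | hr
    · exact hr
    · rw [hr, zpow_one] at h
      have h5 := congrArg Complex.re h
      simp at h5
    · rw [hr, e1] at h
      norm_num at h
    · rw [hr, show (3 : ℤ) = 2 + 1 from rfl, zpow_add₀ hI, e1, zpow_one] at h
      have := congrArg Complex.im h
      simp at this
  · intro h
    rw [show e = 4 * (e / 4) from by omega]
    exact h4

lemma phase_aux (a b c d : ℤ) :
    Complex.I ^ a * Complex.I ^ b * Complex.I ^ (-c) * (-1 : ℂ) ^ d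
      = Complex.I ^ (a + b - c + 2 * d) := by
  have hI := Complex.I_ne_zero
  have e1 : Complex.I ^ (2 : ℤ) = -1 := by
    rw [show (2 : ℤ) = ((2 : ℕ) : ℤ) from rfl, zpow_natCast, Complex.I_sq]
  rw [show ((-1 : ℂ)) = Complex.I ^ (2 : ℤ) from e1.symm, ← zpow_mul, ← zpow_add₀ hI,
    ← zpow_add₀ hI, ← zpow_add₀ hI,
    show a + b + -c + 2 * d = a + b - c + 2 * d from by ring]

lemma wght_eq_wB {n : ℕ} (x y : PV n) : wght x y = wB x y := by
  unfold wght wB phase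
  rw [phase_aux]
  simp only [I_zpow_eq_one_iff]

/-- Basic vector constructor for `F2^4`. -/
def mkv (a b c d : F2) : PV 2 := (![a, b], ![c, d])

/-- First generators of the 15 maximal isotropic subspaces. -/
def U : Fin 15 → PV 2 :=
  ![mkv 0 0 0 1, mkv 0 0 0 1, mkv 0 0 0 1, mkv 0 0 1 0, mkv 0 0 1 0,
    mkv 0 0 1 1, mkv 0 0 1 1, mkv 0 1 0 0, mkv 0 1 0 0, mkv 0 1 0 1,
    mkv 0 1 0 1, mkv 0 1 1 0, mkv 0 1 1 0, mkv 0 1 1 1, mkv 0 1 1 1]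

/-- Second generators of the 15 maximal isotropic subspaces. -/
def Vv : Fin 15 → PV 2 :=
  ![mkv 0 0 1 0, mkv 1 0 0 0, mkv 1 0 1 0, mkv 0 1 0 0, mkv 0 1 0 1,
    mkv 1 1 0 0, mkv 1 1 0 1, mkv 1 0 0 0, mkv 1 0 1 0, mkv 1 0 0 0,
    mkv 1 0 1 0, mkv 1 0 0 1, mkv 1 0 1 1, mkv 1 0 0 1, mkv 1 0 1 1]

/-- The constants `w(u_i, v_i)`. -/
def cc : Fin 15 → F2 := ![0, 0, 0, 0, 0, 1, 0, 0, 0, 0, 0, 0, 1, 1, 0]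

/-- The 15 maximal isotropic subspaces. -/
def h15 (i : Fin 15) : Submodule F2 (PV 2) := Submodule.span F2 {U i, Vv i}

/-- The 12 "good" contexts. -/
def good12 : Finset (Fin 15) := {0, 1, 2, 3, 4, 6, 7, 8, 9, 10, 11, 14}

lemma span_pair_le {u v : PV 2} {S : Submodule F2 (PV 2)} (hu : u ∈ S) (hv : v ∈ S) :
    Submodule.span F2 {u, v} ≤ S := by
  rw [Submodule.span_le]
  rintro x (rfl | rfl)
  exacts [hu, hv]

lemma span_pair_eq_of {u v u' v' : PV 2}
    (h1 : u ∈ Submodule.span F2 {u', v'}) (h2 : v ∈ Submodule.span F2 {u', v'})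
    (h3 : u' ∈ Submodule.span F2 {u, v}) (h4 : v' ∈ Submodule.span F2 {u, v}) :
    Submodule.span F2 ({u, v} : Set (PV 2)) = Submodule.span F2 {u', v'} :=
  le_antisymm (span_pair_le h1 h2) (span_pair_le h3 h4)

lemma mem_h15_left (i : Fin 15) : U i ∈ h15 i :=
  Submodule.subset_span (Set.mem_insert _ _)

lemma mem_h15_right (i : Fin 15) : Vv i ∈ h15 i :=
  Submodule.subset_span (Set.mem_insert_iff.mpr (Or.inr rfl))

lemma symp_span_zero : ∀ u v : PV 2, symp u v = 0 →
    ∀ a b c d : F2, symp (a • u + b • v) (c • u + d • v) = 0 := by decide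

lemma symp_UV : ∀ i : Fin 15, symp (U i) (Vv i) = 0 := by decide

lemma indep_UV : ∀ i : Fin 15, ∀ a b : F2, a • U i + b • Vv i = 0 → a = 0 ∧ b = 0 := by decide

lemma wB_UV : ∀ i : Fin 15, wB (U i) (Vv i) = cc i := by decide

lemma wB_good : ∀ i : Fin 15, i ∈ good12 →
    ∀ a b c d : F2, wB (a • U i + b • Vv i) (c • U i + d • Vv i) = 0 := by decide

lemma classify : ∀ u v : PV 2, u ≠ 0 → (∀ a : F2, a • u ≠ v) → symp u v = 0 →
    ∃ i : Fin 15, (∃ a b : F2, a • U i + b • Vv i = u) ∧ (∃ a b : F2, a • U i + b • Vv i = v) ∧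
      (∃ a b : F2, a • u + b • v = U i) ∧ (∃ a b : F2, a • u + b • v = Vv i) := by decide

lemma distinct_h15 : ∀ i j : Fin 15,
    ((∃ a b : F2, a • U j + b • Vv j = U i) ∧ (∃ a b : F2, a • U j + b • Vv j = Vv i) ∧
      (∃ a b : F2, a • U i + b • Vv i = U j) ∧ (∃ a b : F2, a • U i + b • Vv i = Vv j)) →
    i = j := by decide

lemma F2_cases : ∀ a : F2, a = 0 ∨ a = 1 := by decide

lemma h15_injective : Function.Injective h15 := by
  intro i j h
  apply distinct_h15 i j
  exact ⟨Submodule.mem_span_pair.mp (show U i ∈ h15 j from h ▸ mem_h15_left i),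
    Submodule.mem_span_pair.mp (show Vv i ∈ h15 j from h ▸ mem_h15_right i),
    Submodule.mem_span_pair.mp (show U j ∈ h15 i from h.symm ▸ mem_h15_left j),
    Submodule.mem_span_pair.mp (show Vv j ∈ h15 i from h.symm ▸ mem_h15_right j)⟩

lemma range_pair (u v : PV 2) : Set.range ![u, v] = {u, v} := by
  ext x
  simp only [Set.mem_range, Fin.exists_fin_two, Matrix.cons_val_zero, Matrix.cons_val_one,
    Matrix.head_cons, Set.mem_insert_iff, Set.mem_singleton_iff]
  tauto

lemma finrank_span_pair {u v : PV 2}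
    (h : ∀ a b : F2, a • u + b • v = 0 → a = 0 ∧ b = 0) :
    Module.finrank F2 (Submodule.span F2 ({u, v} : Set (PV 2))) = 2 := by
  have hli : LinearIndependent F2 ![u, v] := LinearIndependent.pair_iff.mpr h
  have h2 := finrank_span_eq_card (R := F2) hli
  rwa [range_pair, Fintype.card_fin] at h2

lemma isotropic_h15 (i : Fin 15) : IsIsotropic (h15 i) := by
  intro x hx y hy
  obtain ⟨a, b, rfl⟩ := Submodule.mem_span_pair.mp hx
  obtain ⟨c, d, rfl⟩ := Submodule.mem_span_pair.mp hy
  exact symp_span_zero (U i) (Vv i) (symp_UV i) a b c d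

lemma h15_mem_Lset (i : Fin 15) : h15 i ∈ Lset 2 2 :=
  ⟨isotropic_h15 i, finrank_span_pair (indep_UV i)⟩

lemma Lset_eq_range : Lset 2 2 = Set.range h15 := by
  ext S
  constructor
  · rintro ⟨hiso, hfr⟩
    have hSbot : S ≠ ⊥ := by
      intro h
      rw [h, finrank_bot] at hfr
      exact absurd hfr (by norm_num)
    obtain ⟨u, huS, hu0⟩ := Submodule.exists_mem_ne_zero_of_ne_bot hSbot
    have hu_span : Submodule.span F2 {u} ≤ S := by
      rw [Submodule.span_le, Set.singleton_subset_iff]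
      exact huS
    have hne : Submodule.span F2 {u} ≠ S := by
      intro h
      have h1 : Module.finrank F2 (Submodule.span F2 {u}) = 1 := finrank_span_singleton hu0
      rw [h, hfr] at h1
      exact absurd h1 (by norm_num)
    obtain ⟨v, hvS, hv_not⟩ := SetLike.exists_of_lt (lt_of_le_of_ne hu_span hne)
    have hv_not' : ∀ a : F2, a • u ≠ v := fun a ha =>
      hv_not (Submodule.mem_span_singleton.mpr ⟨a, ha⟩)
    have hindep : ∀ a b : F2, a • u + b • v = 0 → a = 0 ∧ b = 0 := by
      intro a b hab
      rcases F2_cases b with hb | hb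
      · subst hb
        rw [zero_smul, add_zero] at hab
        rcases F2_cases a with ha | ha
        · exact ⟨ha, rfl⟩
        · subst ha
          rw [one_smul] at hab
          exact absurd hab hu0
      · exfalso
        subst hb
        rw [one_smul] at hab
        have hz : a • u + a • u = 0 := by
          rw [← add_smul, show a + a = 0 from by rcases F2_cases a with rfl | rfl <;> decide,
            zero_smul]
        have hv_eq : v = a • u := by
          calc v = (a • u + a • u) + v := by rw [hz, zero_add]
          _ = a • u + (a • u + v) := by rw [add_assoc]
          _ = a • u := by rw [hab, add_zero]
        exact hv_not' a hv_eq.symm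
    have hTle : Submodule.span F2 ({u, v} : Set (PV 2)) ≤ S := span_pair_le huS hvS
    have hfrT := finrank_span_pair hindep
    have hST : Submodule.span F2 ({u, v} : Set (PV 2)) = S :=
      Submodule.eq_of_le_of_finrank_eq hTle (by rw [hfrT, hfr])
    have hsymp : symp u v = 0 := hiso u huS v hvS
    obtain ⟨i, h1, h2, h3, h4⟩ := classify u v hu0 hv_not' hsymp
    refine ⟨i, ?_⟩
    have := span_pair_eq_of (Submodule.mem_span_pair.mpr h1) (Submodule.mem_span_pair.mpr h2)
      (Submodule.mem_span_pair.mpr h3) (Submodule.mem_span_pair.mpr h4)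
    exact this.symm.trans hST
  · rintro ⟨i, rfl⟩
    exact h15_mem_Lset i

lemma exists_pair_superset (s : Finset (Fin 15)) (h : s.card ≤ 2) :
    ∃ i j : Fin 15, s ⊆ {i, j} := by
  rcases s.eq_empty_or_nonempty with rfl | ⟨i, hi⟩
  · exact ⟨0, 0, by simp⟩
  rcases (s.erase i).eq_empty_or_nonempty with he | ⟨j, hj⟩
  · refine ⟨i, i, fun x hx => ?_⟩
    have hxi : x = i := by
      by_contra hxi
      have hxe : x ∈ s.erase i := Finset.mem_erase.mpr ⟨hxi, hx⟩
      rw [he] at hxe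
      exact absurd hxe (Finset.notMem_empty x)
    simp [hxi]
  refine ⟨i, j, fun x hx => ?_⟩
  by_cases hxi : x = i
  · simp [hxi]
  by_cases hxj : x = j
  · simp [hxj]
  exfalso
  have hji : j ≠ i := (Finset.mem_erase.mp hj).1
  have hjs : j ∈ s := (Finset.mem_erase.mp hj).2
  have hsub : ({x, i, j} : Finset (Fin 15)) ⊆ s := by
    intro y hy
    rcases Finset.mem_insert.mp hy with rfl | hy
    · exact hx
    rcases Finset.mem_insert.mp hy with rfl | hy
    · exact hi
    · rw [Finset.mem_singleton.mp hy]
      exact hjs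
  have h3 : ({x, i, j} : Finset (Fin 15)).card = 3 := by
    rw [Finset.card_insert_of_notMem (by simp [hxi, hxj]),
      Finset.card_insert_of_notMem (by simpa using fun hh => hji hh.symm),
      Finset.card_singleton]
  have := Finset.card_le_card hsub
  omega

lemma gridlem0 : ∀ x0 x1 x2 x3 x4 x5 x6 x7 x8 : F2, ¬(x2 = x0 + x1 + 0 ∧ x4 = x0 + x3 + 0 ∧ x6 = x1 + x5 + 0 ∧ x8 = x2 + x7 + 1 ∧ x7 = x5 + x3 + 0 ∧ x8 = x6 + x4 + 0) := by decide
lemma gridlem1 : ∀ x0 x1 x2 x3 x4 x5 x6 x7 x8 : F2, ¬(x2 = x0 + x1 + 0 ∧ x4 = x0 + x3 + 0 ∧ x6 = x1 + x5 + 0 ∧ x8 = x2 + x7 + 0 ∧ x7 = x5 + x3 + 0 ∧ x8 = x6 + x4 + 1) := by decide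
lemma gridlem2 : ∀ x0 x1 x2 x3 x4 x5 x6 x7 x8 : F2, ¬(x2 = x0 + x1 + 0 ∧ x4 = x0 + x3 + 0 ∧ x6 = x1 + x5 + 0 ∧ x8 = x2 + x7 + 0 ∧ x8 = x5 + x3 + 0 ∧ x7 = x6 + x4 + 1) := by decide
lemma gridlem3 : ∀ x0 x1 x2 x3 x4 x5 x6 x7 x8 : F2, ¬(x2 = x0 + x1 + 0 ∧ x4 = x0 + x3 + 0 ∧ x6 = x1 + x5 + 0 ∧ x8 = x2 + x7 + 1 ∧ x8 = x5 + x3 + 0 ∧ x7 = x6 + x4 + 0) := by decide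
lemma gridlem4 : ∀ x0 x1 x2 x3 x4 x5 x6 x7 x8 : F2, ¬(x2 = x0 + x1 + 0 ∧ x4 = x0 + x3 + 0 ∧ x6 = x5 + x1 + 0 ∧ x7 = x5 + x3 + 0 ∧ x7 = x8 + x2 + 1 ∧ x6 = x8 + x4 + 0) := by decide
lemma gridlem5 : ∀ x0 x1 x2 x3 x4 x5 x6 x7 x8 : F2, ¬(x2 = x0 + x1 + 0 ∧ x4 = x0 + x3 + 0 ∧ x6 = x5 + x1 + 0 ∧ x7 = x5 + x3 + 0 ∧ x7 = x8 + x2 + 0 ∧ x6 = x8 + x4 + 1) := by decide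
lemma gridlem6 : ∀ x0 x1 x2 x3 x4 x5 x6 x7 x8 : F2, ¬(x2 = x0 + x1 + 0 ∧ x4 = x0 + x3 + 0 ∧ x6 = x1 + x5 + 0 ∧ x7 = x3 + x5 + 0 ∧ x7 = x2 + x8 + 1 ∧ x6 = x4 + x8 + 0) := by decide
lemma gridlem7 : ∀ x0 x1 x2 x3 x4 x5 x6 x7 x8 : F2, ¬(x2 = x0 + x1 + 0 ∧ x4 = x0 + x3 + 0 ∧ x6 = x1 + x5 + 0 ∧ x7 = x3 + x5 + 0 ∧ x7 = x2 + x8 + 0 ∧ x6 = x4 + x8 + 1) := by decide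
lemma gridlem8 : ∀ x0 x1 x2 x3 x4 x5 x6 x7 x8 : F2, ¬(x2 = x0 + x1 + 1 ∧ x4 = x0 + x3 + 0 ∧ x1 = x5 + x6 + 0 ∧ x4 = x5 + x7 + 0 ∧ x3 = x8 + x6 + 0 ∧ x2 = x8 + x7 + 0) := by decide
lemma gridlem9 : ∀ x0 x1 x2 x3 x4 x5 x6 x7 x8 : F2, ¬(x2 = x0 + x1 + 1 ∧ x4 = x0 + x3 + 0 ∧ x2 = x5 + x6 + 0 ∧ x3 = x5 + x7 + 1 ∧ x4 = x8 + x6 + 1 ∧ x1 = x8 + x7 + 0) := by decide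

abbrev avoidP (i j : Fin 15) : Prop :=
  ((0:Fin 15) ≠ i ∧ (0:Fin 15) ≠ j ∧ (1:Fin 15) ≠ i ∧ (1:Fin 15) ≠ j ∧ (3:Fin 15) ≠ i ∧ (3:Fin 15) ≠ j ∧ (5:Fin 15) ≠ i ∧ (5:Fin 15) ≠ j ∧ (7:Fin 15) ≠ i ∧ (7:Fin 15) ≠ j ∧ (11:Fin 15) ≠ i ∧ (11:Fin 15) ≠ j) ∨
  ((0:Fin 15) ≠ i ∧ (0:Fin 15) ≠ j ∧ (1:Fin 15) ≠ i ∧ (1:Fin 15) ≠ j ∧ (4:Fin 15) ≠ i ∧ (4:Fin 15) ≠ j ∧ (6:Fin 15) ≠ i ∧ (6:Fin 15) ≠ j ∧ (9:Fin 15) ≠ i ∧ (9:Fin 15) ≠ j ∧ (13:Fin 15) ≠ i ∧ (13:Fin 15) ≠ j) ∨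
  ((0:Fin 15) ≠ i ∧ (0:Fin 15) ≠ j ∧ (2:Fin 15) ≠ i ∧ (2:Fin 15) ≠ j ∧ (3:Fin 15) ≠ i ∧ (3:Fin 15) ≠ j ∧ (6:Fin 15) ≠ i ∧ (6:Fin 15) ≠ j ∧ (8:Fin 15) ≠ i ∧ (8:Fin 15) ≠ j ∧ (12:Fin 15) ≠ i ∧ (12:Fin 15) ≠ j) ∨
  ((0:Fin 15) ≠ i ∧ (0:Fin 15) ≠ j ∧ (2:Fin 15) ≠ i ∧ (2:Fin 15) ≠ j ∧ (4:Fin 15) ≠ i ∧ (4:Fin 15) ≠ j ∧ (5:Fin 15) ≠ i ∧ (5:Fin 15) ≠ j ∧ (10:Fin 15) ≠ i ∧ (10:Fin 15) ≠ j ∧ (14:Fin 15) ≠ i ∧ (14:Fin 15) ≠ j) ∨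
  ((1:Fin 15) ≠ i ∧ (1:Fin 15) ≠ j ∧ (2:Fin 15) ≠ i ∧ (2:Fin 15) ≠ j ∧ (7:Fin 15) ≠ i ∧ (7:Fin 15) ≠ j ∧ (8:Fin 15) ≠ i ∧ (8:Fin 15) ≠ j ∧ (13:Fin 15) ≠ i ∧ (13:Fin 15) ≠ j ∧ (14:Fin 15) ≠ i ∧ (14:Fin 15) ≠ j) ∨
  ((1:Fin 15) ≠ i ∧ (1:Fin 15) ≠ j ∧ (2:Fin 15) ≠ i ∧ (2:Fin 15) ≠ j ∧ (9:Fin 15) ≠ i ∧ (9:Fin 15) ≠ j ∧ (10:Fin 15) ≠ i ∧ (10:Fin 15) ≠ j ∧ (11:Fin 15) ≠ i ∧ (11:Fin 15) ≠ j ∧ (12:Fin 15) ≠ i ∧ (12:Fin 15) ≠ j) ∨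
  ((3:Fin 15) ≠ i ∧ (3:Fin 15) ≠ j ∧ (4:Fin 15) ≠ i ∧ (4:Fin 15) ≠ j ∧ (7:Fin 15) ≠ i ∧ (7:Fin 15) ≠ j ∧ (9:Fin 15) ≠ i ∧ (9:Fin 15) ≠ j ∧ (12:Fin 15) ≠ i ∧ (12:Fin 15) ≠ j ∧ (14:Fin 15) ≠ i ∧ (14:Fin 15) ≠ j) ∨
  ((3:Fin 15) ≠ i ∧ (3:Fin 15) ≠ j ∧ (4:Fin 15) ≠ i ∧ (4:Fin 15) ≠ j ∧ (8:Fin 15) ≠ i ∧ (8:Fin 15) ≠ j ∧ (10:Fin 15) ≠ i ∧ (10:Fin 15) ≠ j ∧ (11:Fin 15) ≠ i ∧ (11:Fin 15) ≠ j ∧ (13:Fin 15) ≠ i ∧ (13:Fin 15) ≠ j) ∨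
  ((5:Fin 15) ≠ i ∧ (5:Fin 15) ≠ j ∧ (6:Fin 15) ≠ i ∧ (6:Fin 15) ≠ j ∧ (7:Fin 15) ≠ i ∧ (7:Fin 15) ≠ j ∧ (8:Fin 15) ≠ i ∧ (8:Fin 15) ≠ j ∧ (9:Fin 15) ≠ i ∧ (9:Fin 15) ≠ j ∧ (10:Fin 15) ≠ i ∧ (10:Fin 15) ≠ j) ∨
  ((5:Fin 15) ≠ i ∧ (5:Fin 15) ≠ j ∧ (6:Fin 15) ≠ i ∧ (6:Fin 15) ≠ j ∧ (11:Fin 15) ≠ i ∧ (11:Fin 15) ≠ j ∧ (12:Fin 15) ≠ i ∧ (12:Fin 15) ≠ j ∧ (13:Fin 15) ≠ i ∧ (13:Fin 15) ≠ j ∧ (14:Fin 15) ≠ i ∧ (14:Fin 15) ≠ j)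

lemma avoid_all : ∀ i j : Fin 15, avoidP i j := by decide


/-- **`Pval(L^2) = 4/5`.** Among the 15 maximal (2-dimensional) isotropic subspaces of
`F2^4`, the maximum size of a subset admitting a pairwise consistent family of outcomes is
exactly 12. -/
theorem pval_L2 :
    Nat.card (Lset 2 2) = 15 ∧
    (∃ D ⊆ Lset 2 2, Nat.card D = 12 ∧
        ∃ f : (S : Submodule F2 (PV 2)) → (S → F2),
          (∀ S ∈ D, IsOutcome S (f S)) ∧
          (∀ S₁ ∈ D, ∀ S₂ ∈ D, ConsistentOn (f S₁) (f S₂))) ∧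
    (∀ D ⊆ Lset 2 2,
        (∃ f : (S : Submodule F2 (PV 2)) → (S → F2),
            (∀ S ∈ D, IsOutcome S (f S)) ∧
            (∀ S₁ ∈ D, ∀ S₂ ∈ D, ConsistentOn (f S₁) (f S₂))) →
        Nat.card D ≤ 12) := by
  classical
  refine ⟨?_, ?_, ?_⟩
  · -- there are exactly 15 maximal isotropic subspaces
    rw [Lset_eq_range, Nat.card_coe_set_eq, ← Set.image_univ,
      Set.ncard_image_of_injective _ h15_injective, Set.ncard_univ, Nat.card_eq_fintype_card,
      Fintype.card_fin]
  · -- a consistent family on 12 of them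
    refine ⟨h15 '' ↑good12, ?_, ?_, ?_⟩
    · rintro S ⟨i, _, rfl⟩
      exact h15_mem_Lset i
    · rw [Nat.card_coe_set_eq, Set.ncard_image_of_injective _ h15_injective,
        Set.ncard_coe_finset]
      decide
    · refine ⟨fun _ => fun _ => 0, ?_, ?_⟩
      · rintro S ⟨i, hi, rfl⟩
        intro x y
        obtain ⟨a, b, hab⟩ := Submodule.mem_span_pair.mp x.2
        obtain ⟨c, d, hcd⟩ := Submodule.mem_span_pair.mp y.2
        have hw : wght (x : PV 2) (y : PV 2) = 0 := by
          rw [wght_eq_wB, ← hab, ← hcd]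
          exact wB_good i (Finset.mem_coe.mp hi) a b c d
        rw [hw]
        norm_num
      · rintro S₁ ⟨i, _, rfl⟩ S₂ ⟨j, _, rfl⟩ v h1 h2
        rfl
  · -- no consistent family on 13 of them
    rintro D hD ⟨f, hfo, hfc⟩
    by_contra hc
    push_neg at hc
    let g : PV 2 → F2 := fun x =>
      if h : ∃ S, S ∈ D ∧ x ∈ S then f h.choose ⟨x, h.choose_spec.2⟩ else 0
    have hg : ∀ S, S ∈ D → ∀ x (hx : x ∈ S), g x = f S ⟨x, hx⟩ := by
      intro S hS x hx
      have hex : ∃ S', S' ∈ D ∧ x ∈ S' := ⟨S, hS, hx⟩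
      have h1 : g x = f hex.choose ⟨x, hex.choose_spec.2⟩ := dif_pos hex
      rw [h1]
      exact hfc hex.choose hex.choose_spec.1 S hS x hex.choose_spec.2 hx
    have hC : ∀ m : Fin 15, h15 m ∈ D →
        g (U m + Vv m) = g (U m) + g (Vv m) + cc m := by
      intro m hm
      have hu := mem_h15_left m
      have hv := mem_h15_right m
      have h := hfo (h15 m) hm ⟨U m, hu⟩ ⟨Vv m, hv⟩
      have h' : f (h15 m) ⟨U m + Vv m, add_mem hu hv⟩
          = f (h15 m) ⟨U m, hu⟩ + f (h15 m) ⟨Vv m, hv⟩ + wght (U m) (Vv m) := h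
      rw [hg _ hm _ (add_mem hu hv), hg _ hm _ hu, hg _ hm _ hv, h', wght_eq_wB, wB_UV m]
    let T : Finset (Fin 15) := Finset.univ.filter (fun i => h15 i ∈ D)
    have hTcard : 13 ≤ T.card := by
      have hsub : D ⊆ (h15 '' ↑T) := by
        intro S hS
        have hrange : S ∈ Set.range h15 := by
          rw [← Lset_eq_range]
          exact hD hS
        obtain ⟨i, rfl⟩ := hrange
        exact ⟨i, by simp [T, Finset.mem_filter, hS], rfl⟩
      have h1 : Nat.card D ≤ T.card := by
        calc Nat.card D = D.ncard := Nat.card_coe_set_eq D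
        _ ≤ (h15 '' ↑T).ncard := Set.ncard_le_ncard hsub (Set.toFinite _)
        _ = (↑T : Set (Fin 15)).ncard := Set.ncard_image_of_injective _ h15_injective
        _ = T.card := Set.ncard_coe_finset T
      omega
    have hcompl : Tᶜ.card ≤ 2 := by
      have h2 := Finset.card_compl T
      rw [Fintype.card_fin] at h2
      omega
    obtain ⟨i, j, hij⟩ := exists_pair_superset Tᶜ hcompl
    have hmem : ∀ m : Fin 15, m ≠ i → m ≠ j → h15 m ∈ D := by
      intro m h1 h2
      have hmT : m ∈ T := by
        by_contra hm
        have hmc : m ∈ Tᶜ := Finset.mem_compl.mpr hm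
        rcases Finset.mem_insert.mp (hij hmc) with h | h
        · exact h1 h
        · exact h2 (Finset.mem_singleton.mp h)
      exact (Finset.mem_filter.mp hmT).2
    rcases avoid_all i j with hcase | hcase | hcase | hcase | hcase | hcase | hcase | hcase | hcase | hcase
    · obtain ⟨hm0_1, hm0_2, hm1_1, hm1_2, hm3_1, hm3_2, hm5_1, hm5_2, hm7_1, hm7_2, hm11_1, hm11_2⟩ := hcase
      have H0 := hC 0 (hmem 0 hm0_1 hm0_2)
      rw [show U 0 + Vv 0 = mkv 0 0 1 1 from by decide, show U 0 = mkv 0 0 0 1 from by decide,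
        show Vv 0 = mkv 0 0 1 0 from by decide, show cc 0 = 0 from by decide] at H0
      have H1 := hC 1 (hmem 1 hm1_1 hm1_2)
      rw [show U 1 + Vv 1 = mkv 1 0 0 1 from by decide, show U 1 = mkv 0 0 0 1 from by decide,
        show Vv 1 = mkv 1 0 0 0 from by decide, show cc 1 = 0 from by decide] at H1
      have H3 := hC 3 (hmem 3 hm3_1 hm3_2)
      rw [show U 3 + Vv 3 = mkv 0 1 1 0 from by decide, show U 3 = mkv 0 0 1 0 from by decide,
        show Vv 3 = mkv 0 1 0 0 from by decide, show cc 3 = 0 from by decide] at H3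
      have H5 := hC 5 (hmem 5 hm5_1 hm5_2)
      rw [show U 5 + Vv 5 = mkv 1 1 1 1 from by decide, show U 5 = mkv 0 0 1 1 from by decide,
        show Vv 5 = mkv 1 1 0 0 from by decide, show cc 5 = 1 from by decide] at H5
      have H7 := hC 7 (hmem 7 hm7_1 hm7_2)
      rw [show U 7 + Vv 7 = mkv 1 1 0 0 from by decide, show U 7 = mkv 0 1 0 0 from by decide,
        show Vv 7 = mkv 1 0 0 0 from by decide, show cc 7 = 0 from by decide] at H7
      have H11 := hC 11 (hmem 11 hm11_1 hm11_2)
      rw [show U 11 + Vv 11 = mkv 1 1 1 1 from by decide, show U 11 = mkv 0 1 1 0 from by decide,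
        show Vv 11 = mkv 1 0 0 1 from by decide, show cc 11 = 0 from by decide] at H11
      exact gridlem0 _ _ _ _ _ _ _ _ _ ⟨H0, H1, H3, H5, H7, H11⟩
    · obtain ⟨hm0_1, hm0_2, hm1_1, hm1_2, hm4_1, hm4_2, hm6_1, hm6_2, hm9_1, hm9_2, hm13_1, hm13_2⟩ := hcase
      have H0 := hC 0 (hmem 0 hm0_1 hm0_2)
      rw [show U 0 + Vv 0 = mkv 0 0 1 1 from by decide, show U 0 = mkv 0 0 0 1 from by decide,
        show Vv 0 = mkv 0 0 1 0 from by decide, show cc 0 = 0 from by decide] at H0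
      have H1 := hC 1 (hmem 1 hm1_1 hm1_2)
      rw [show U 1 + Vv 1 = mkv 1 0 0 1 from by decide, show U 1 = mkv 0 0 0 1 from by decide,
        show Vv 1 = mkv 1 0 0 0 from by decide, show cc 1 = 0 from by decide] at H1
      have H4 := hC 4 (hmem 4 hm4_1 hm4_2)
      rw [show U 4 + Vv 4 = mkv 0 1 1 1 from by decide, show U 4 = mkv 0 0 1 0 from by decide,
        show Vv 4 = mkv 0 1 0 1 from by decide, show cc 4 = 0 from by decide] at H4
      have H6 := hC 6 (hmem 6 hm6_1 hm6_2)
      rw [show U 6 + Vv 6 = mkv 1 1 1 0 from by decide, show U 6 = mkv 0 0 1 1 from by decide,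
        show Vv 6 = mkv 1 1 0 1 from by decide, show cc 6 = 0 from by decide] at H6
      have H9 := hC 9 (hmem 9 hm9_1 hm9_2)
      rw [show U 9 + Vv 9 = mkv 1 1 0 1 from by decide, show U 9 = mkv 0 1 0 1 from by decide,
        show Vv 9 = mkv 1 0 0 0 from by decide, show cc 9 = 0 from by decide] at H9
      have H13 := hC 13 (hmem 13 hm13_1 hm13_2)
      rw [show U 13 + Vv 13 = mkv 1 1 1 0 from by decide, show U 13 = mkv 0 1 1 1 from by decide,
        show Vv 13 = mkv 1 0 0 1 from by decide, show cc 13 = 1 from by decide] at H13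
      exact gridlem1 _ _ _ _ _ _ _ _ _ ⟨H0, H1, H4, H6, H9, H13⟩
    · obtain ⟨hm0_1, hm0_2, hm2_1, hm2_2, hm3_1, hm3_2, hm6_1, hm6_2, hm8_1, hm8_2, hm12_1, hm12_2⟩ := hcase
      have H0 := hC 0 (hmem 0 hm0_1 hm0_2)
      rw [show U 0 + Vv 0 = mkv 0 0 1 1 from by decide, show U 0 = mkv 0 0 0 1 from by decide,
        show Vv 0 = mkv 0 0 1 0 from by decide, show cc 0 = 0 from by decide] at H0
      have H2 := hC 2 (hmem 2 hm2_1 hm2_2)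
      rw [show U 2 + Vv 2 = mkv 1 0 1 1 from by decide, show U 2 = mkv 0 0 0 1 from by decide,
        show Vv 2 = mkv 1 0 1 0 from by decide, show cc 2 = 0 from by decide] at H2
      have H3 := hC 3 (hmem 3 hm3_1 hm3_2)
      rw [show U 3 + Vv 3 = mkv 0 1 1 0 from by decide, show U 3 = mkv 0 0 1 0 from by decide,
        show Vv 3 = mkv 0 1 0 0 from by decide, show cc 3 = 0 from by decide] at H3
      have H6 := hC 6 (hmem 6 hm6_1 hm6_2)
      rw [show U 6 + Vv 6 = mkv 1 1 1 0 from by decide, show U 6 = mkv 0 0 1 1 from by decide,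
        show Vv 6 = mkv 1 1 0 1 from by decide, show cc 6 = 0 from by decide] at H6
      have H8 := hC 8 (hmem 8 hm8_1 hm8_2)
      rw [show U 8 + Vv 8 = mkv 1 1 1 0 from by decide, show U 8 = mkv 0 1 0 0 from by decide,
        show Vv 8 = mkv 1 0 1 0 from by decide, show cc 8 = 0 from by decide] at H8
      have H12 := hC 12 (hmem 12 hm12_1 hm12_2)
      rw [show U 12 + Vv 12 = mkv 1 1 0 1 from by decide, show U 12 = mkv 0 1 1 0 from by decide,
        show Vv 12 = mkv 1 0 1 1 from by decide, show cc 12 = 1 from by decide] at H12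
      exact gridlem2 _ _ _ _ _ _ _ _ _ ⟨H0, H2, H3, H6, H8, H12⟩
    · obtain ⟨hm0_1, hm0_2, hm2_1, hm2_2, hm4_1, hm4_2, hm5_1, hm5_2, hm10_1, hm10_2, hm14_1, hm14_2⟩ := hcase
      have H0 := hC 0 (hmem 0 hm0_1 hm0_2)
      rw [show U 0 + Vv 0 = mkv 0 0 1 1 from by decide, show U 0 = mkv 0 0 0 1 from by decide,
        show Vv 0 = mkv 0 0 1 0 from by decide, show cc 0 = 0 from by decide] at H0
      have H2 := hC 2 (hmem 2 hm2_1 hm2_2)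
      rw [show U 2 + Vv 2 = mkv 1 0 1 1 from by decide, show U 2 = mkv 0 0 0 1 from by decide,
        show Vv 2 = mkv 1 0 1 0 from by decide, show cc 2 = 0 from by decide] at H2
      have H4 := hC 4 (hmem 4 hm4_1 hm4_2)
      rw [show U 4 + Vv 4 = mkv 0 1 1 1 from by decide, show U 4 = mkv 0 0 1 0 from by decide,
        show Vv 4 = mkv 0 1 0 1 from by decide, show cc 4 = 0 from by decide] at H4
      have H5 := hC 5 (hmem 5 hm5_1 hm5_2)
      rw [show U 5 + Vv 5 = mkv 1 1 1 1 from by decide, show U 5 = mkv 0 0 1 1 from by decide,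
        show Vv 5 = mkv 1 1 0 0 from by decide, show cc 5 = 1 from by decide] at H5
      have H10 := hC 10 (hmem 10 hm10_1 hm10_2)
      rw [show U 10 + Vv 10 = mkv 1 1 1 1 from by decide, show U 10 = mkv 0 1 0 1 from by decide,
        show Vv 10 = mkv 1 0 1 0 from by decide, show cc 10 = 0 from by decide] at H10
      have H14 := hC 14 (hmem 14 hm14_1 hm14_2)
      rw [show U 14 + Vv 14 = mkv 1 1 0 0 from by decide, show U 14 = mkv 0 1 1 1 from by decide,
        show Vv 14 = mkv 1 0 1 1 from by decide, show cc 14 = 0 from by decide] at H14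
      exact gridlem3 _ _ _ _ _ _ _ _ _ ⟨H0, H2, H4, H5, H10, H14⟩
    · obtain ⟨hm1_1, hm1_2, hm2_1, hm2_2, hm7_1, hm7_2, hm8_1, hm8_2, hm13_1, hm13_2, hm14_1, hm14_2⟩ := hcase
      have H1 := hC 1 (hmem 1 hm1_1 hm1_2)
      rw [show U 1 + Vv 1 = mkv 1 0 0 1 from by decide, show U 1 = mkv 0 0 0 1 from by decide,
        show Vv 1 = mkv 1 0 0 0 from by decide, show cc 1 = 0 from by decide] at H1
      have H2 := hC 2 (hmem 2 hm2_1 hm2_2)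
      rw [show U 2 + Vv 2 = mkv 1 0 1 1 from by decide, show U 2 = mkv 0 0 0 1 from by decide,
        show Vv 2 = mkv 1 0 1 0 from by decide, show cc 2 = 0 from by decide] at H2
      have H7 := hC 7 (hmem 7 hm7_1 hm7_2)
      rw [show U 7 + Vv 7 = mkv 1 1 0 0 from by decide, show U 7 = mkv 0 1 0 0 from by decide,
        show Vv 7 = mkv 1 0 0 0 from by decide, show cc 7 = 0 from by decide] at H7
      have H8 := hC 8 (hmem 8 hm8_1 hm8_2)
      rw [show U 8 + Vv 8 = mkv 1 1 1 0 from by decide, show U 8 = mkv 0 1 0 0 from by decide,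
        show Vv 8 = mkv 1 0 1 0 from by decide, show cc 8 = 0 from by decide] at H8
      have H13 := hC 13 (hmem 13 hm13_1 hm13_2)
      rw [show U 13 + Vv 13 = mkv 1 1 1 0 from by decide, show U 13 = mkv 0 1 1 1 from by decide,
        show Vv 13 = mkv 1 0 0 1 from by decide, show cc 13 = 1 from by decide] at H13
      have H14 := hC 14 (hmem 14 hm14_1 hm14_2)
      rw [show U 14 + Vv 14 = mkv 1 1 0 0 from by decide, show U 14 = mkv 0 1 1 1 from by decide,
        show Vv 14 = mkv 1 0 1 1 from by decide, show cc 14 = 0 from by decide] at H14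
      exact gridlem4 _ _ _ _ _ _ _ _ _ ⟨H1, H2, H7, H8, H13, H14⟩
    · obtain ⟨hm1_1, hm1_2, hm2_1, hm2_2, hm9_1, hm9_2, hm10_1, hm10_2, hm11_1, hm11_2, hm12_1, hm12_2⟩ := hcase
      have H1 := hC 1 (hmem 1 hm1_1 hm1_2)
      rw [show U 1 + Vv 1 = mkv 1 0 0 1 from by decide, show U 1 = mkv 0 0 0 1 from by decide,
        show Vv 1 = mkv 1 0 0 0 from by decide, show cc 1 = 0 from by decide] at H1
      have H2 := hC 2 (hmem 2 hm2_1 hm2_2)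
      rw [show U 2 + Vv 2 = mkv 1 0 1 1 from by decide, show U 2 = mkv 0 0 0 1 from by decide,
        show Vv 2 = mkv 1 0 1 0 from by decide, show cc 2 = 0 from by decide] at H2
      have H9 := hC 9 (hmem 9 hm9_1 hm9_2)
      rw [show U 9 + Vv 9 = mkv 1 1 0 1 from by decide, show U 9 = mkv 0 1 0 1 from by decide,
        show Vv 9 = mkv 1 0 0 0 from by decide, show cc 9 = 0 from by decide] at H9
      have H10 := hC 10 (hmem 10 hm10_1 hm10_2)
      rw [show U 10 + Vv 10 = mkv 1 1 1 1 from by decide, show U 10 = mkv 0 1 0 1 from by decide,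
        show Vv 10 = mkv 1 0 1 0 from by decide, show cc 10 = 0 from by decide] at H10
      have H11 := hC 11 (hmem 11 hm11_1 hm11_2)
      rw [show U 11 + Vv 11 = mkv 1 1 1 1 from by decide, show U 11 = mkv 0 1 1 0 from by decide,
        show Vv 11 = mkv 1 0 0 1 from by decide, show cc 11 = 0 from by decide] at H11
      have H12 := hC 12 (hmem 12 hm12_1 hm12_2)
      rw [show U 12 + Vv 12 = mkv 1 1 0 1 from by decide, show U 12 = mkv 0 1 1 0 from by decide,
        show Vv 12 = mkv 1 0 1 1 from by decide, show cc 12 = 1 from by decide] at H12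
      exact gridlem5 _ _ _ _ _ _ _ _ _ ⟨H1, H2, H9, H10, H11, H12⟩
    · obtain ⟨hm3_1, hm3_2, hm4_1, hm4_2, hm7_1, hm7_2, hm9_1, hm9_2, hm12_1, hm12_2, hm14_1, hm14_2⟩ := hcase
      have H3 := hC 3 (hmem 3 hm3_1 hm3_2)
      rw [show U 3 + Vv 3 = mkv 0 1 1 0 from by decide, show U 3 = mkv 0 0 1 0 from by decide,
        show Vv 3 = mkv 0 1 0 0 from by decide, show cc 3 = 0 from by decide] at H3
      have H4 := hC 4 (hmem 4 hm4_1 hm4_2)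
      rw [show U 4 + Vv 4 = mkv 0 1 1 1 from by decide, show U 4 = mkv 0 0 1 0 from by decide,
        show Vv 4 = mkv 0 1 0 1 from by decide, show cc 4 = 0 from by decide] at H4
      have H7 := hC 7 (hmem 7 hm7_1 hm7_2)
      rw [show U 7 + Vv 7 = mkv 1 1 0 0 from by decide, show U 7 = mkv 0 1 0 0 from by decide,
        show Vv 7 = mkv 1 0 0 0 from by decide, show cc 7 = 0 from by decide] at H7
      have H9 := hC 9 (hmem 9 hm9_1 hm9_2)
      rw [show U 9 + Vv 9 = mkv 1 1 0 1 from by decide, show U 9 = mkv 0 1 0 1 from by decide,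
        show Vv 9 = mkv 1 0 0 0 from by decide, show cc 9 = 0 from by decide] at H9
      have H12 := hC 12 (hmem 12 hm12_1 hm12_2)
      rw [show U 12 + Vv 12 = mkv 1 1 0 1 from by decide, show U 12 = mkv 0 1 1 0 from by decide,
        show Vv 12 = mkv 1 0 1 1 from by decide, show cc 12 = 1 from by decide] at H12
      have H14 := hC 14 (hmem 14 hm14_1 hm14_2)
      rw [show U 14 + Vv 14 = mkv 1 1 0 0 from by decide, show U 14 = mkv 0 1 1 1 from by decide,
        show Vv 14 = mkv 1 0 1 1 from by decide, show cc 14 = 0 from by decide] at H14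
      exact gridlem6 _ _ _ _ _ _ _ _ _ ⟨H3, H4, H7, H9, H12, H14⟩
    · obtain ⟨hm3_1, hm3_2, hm4_1, hm4_2, hm8_1, hm8_2, hm10_1, hm10_2, hm11_1, hm11_2, hm13_1, hm13_2⟩ := hcase
      have H3 := hC 3 (hmem 3 hm3_1 hm3_2)
      rw [show U 3 + Vv 3 = mkv 0 1 1 0 from by decide, show U 3 = mkv 0 0 1 0 from by decide,
        show Vv 3 = mkv 0 1 0 0 from by decide, show cc 3 = 0 from by decide] at H3
      have H4 := hC 4 (hmem 4 hm4_1 hm4_2)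
      rw [show U 4 + Vv 4 = mkv 0 1 1 1 from by decide, show U 4 = mkv 0 0 1 0 from by decide,
        show Vv 4 = mkv 0 1 0 1 from by decide, show cc 4 = 0 from by decide] at H4
      have H8 := hC 8 (hmem 8 hm8_1 hm8_2)
      rw [show U 8 + Vv 8 = mkv 1 1 1 0 from by decide, show U 8 = mkv 0 1 0 0 from by decide,
        show Vv 8 = mkv 1 0 1 0 from by decide, show cc 8 = 0 from by decide] at H8
      have H10 := hC 10 (hmem 10 hm10_1 hm10_2)
      rw [show U 10 + Vv 10 = mkv 1 1 1 1 from by decide, show U 10 = mkv 0 1 0 1 from by decide,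
        show Vv 10 = mkv 1 0 1 0 from by decide, show cc 10 = 0 from by decide] at H10
      have H11 := hC 11 (hmem 11 hm11_1 hm11_2)
      rw [show U 11 + Vv 11 = mkv 1 1 1 1 from by decide, show U 11 = mkv 0 1 1 0 from by decide,
        show Vv 11 = mkv 1 0 0 1 from by decide, show cc 11 = 0 from by decide] at H11
      have H13 := hC 13 (hmem 13 hm13_1 hm13_2)
      rw [show U 13 + Vv 13 = mkv 1 1 1 0 from by decide, show U 13 = mkv 0 1 1 1 from by decide,
        show Vv 13 = mkv 1 0 0 1 from by decide, show cc 13 = 1 from by decide] at H13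
      exact gridlem7 _ _ _ _ _ _ _ _ _ ⟨H3, H4, H8, H10, H11, H13⟩
    · obtain ⟨hm5_1, hm5_2, hm6_1, hm6_2, hm7_1, hm7_2, hm8_1, hm8_2, hm9_1, hm9_2, hm10_1, hm10_2⟩ := hcase
      have H5 := hC 5 (hmem 5 hm5_1 hm5_2)
      rw [show U 5 + Vv 5 = mkv 1 1 1 1 from by decide, show U 5 = mkv 0 0 1 1 from by decide,
        show Vv 5 = mkv 1 1 0 0 from by decide, show cc 5 = 1 from by decide] at H5
      have H6 := hC 6 (hmem 6 hm6_1 hm6_2)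
      rw [show U 6 + Vv 6 = mkv 1 1 1 0 from by decide, show U 6 = mkv 0 0 1 1 from by decide,
        show Vv 6 = mkv 1 1 0 1 from by decide, show cc 6 = 0 from by decide] at H6
      have H7 := hC 7 (hmem 7 hm7_1 hm7_2)
      rw [show U 7 + Vv 7 = mkv 1 1 0 0 from by decide, show U 7 = mkv 0 1 0 0 from by decide,
        show Vv 7 = mkv 1 0 0 0 from by decide, show cc 7 = 0 from by decide] at H7
      have H8 := hC 8 (hmem 8 hm8_1 hm8_2)
      rw [show U 8 + Vv 8 = mkv 1 1 1 0 from by decide, show U 8 = mkv 0 1 0 0 from by decide,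
        show Vv 8 = mkv 1 0 1 0 from by decide, show cc 8 = 0 from by decide] at H8
      have H9 := hC 9 (hmem 9 hm9_1 hm9_2)
      rw [show U 9 + Vv 9 = mkv 1 1 0 1 from by decide, show U 9 = mkv 0 1 0 1 from by decide,
        show Vv 9 = mkv 1 0 0 0 from by decide, show cc 9 = 0 from by decide] at H9
      have H10 := hC 10 (hmem 10 hm10_1 hm10_2)
      rw [show U 10 + Vv 10 = mkv 1 1 1 1 from by decide, show U 10 = mkv 0 1 0 1 from by decide,
        show Vv 10 = mkv 1 0 1 0 from by decide, show cc 10 = 0 from by decide] at H10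
      exact gridlem8 _ _ _ _ _ _ _ _ _ ⟨H5, H6, H7, H8, H9, H10⟩
    · obtain ⟨hm5_1, hm5_2, hm6_1, hm6_2, hm11_1, hm11_2, hm12_1, hm12_2, hm13_1, hm13_2, hm14_1, hm14_2⟩ := hcase
      have H5 := hC 5 (hmem 5 hm5_1 hm5_2)
      rw [show U 5 + Vv 5 = mkv 1 1 1 1 from by decide, show U 5 = mkv 0 0 1 1 from by decide,
        show Vv 5 = mkv 1 1 0 0 from by decide, show cc 5 = 1 from by decide] at H5
      have H6 := hC 6 (hmem 6 hm6_1 hm6_2)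
      rw [show U 6 + Vv 6 = mkv 1 1 1 0 from by decide, show U 6 = mkv 0 0 1 1 from by decide,
        show Vv 6 = mkv 1 1 0 1 from by decide, show cc 6 = 0 from by decide] at H6
      have H11 := hC 11 (hmem 11 hm11_1 hm11_2)
      rw [show U 11 + Vv 11 = mkv 1 1 1 1 from by decide, show U 11 = mkv 0 1 1 0 from by decide,
        show Vv 11 = mkv 1 0 0 1 from by decide, show cc 11 = 0 from by decide] at H11
      have H12 := hC 12 (hmem 12 hm12_1 hm12_2)
      rw [show U 12 + Vv 12 = mkv 1 1 0 1 from by decide, show U 12 = mkv 0 1 1 0 from by decide,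
        show Vv 12 = mkv 1 0 1 1 from by decide, show cc 12 = 1 from by decide] at H12
      have H13 := hC 13 (hmem 13 hm13_1 hm13_2)
      rw [show U 13 + Vv 13 = mkv 1 1 1 0 from by decide, show U 13 = mkv 0 1 1 1 from by decide,
        show Vv 13 = mkv 1 0 0 1 from by decide, show cc 13 = 1 from by decide] at H13
      have H14 := hC 14 (hmem 14 hm14_1 hm14_2)
      rw [show U 14 + Vv 14 = mkv 1 1 0 0 from by decide, show U 14 = mkv 0 1 1 1 from by decide,
        show Vv 14 = mkv 1 0 1 1 from by decide, show cc 14 = 0 from by decide] at H14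
      exact gridlem9 _ _ _ _ _ _ _ _ _ ⟨H5, H6, H11, H12, H13, H14⟩
end

section
/- For every n ≥ 1 and every one-dimensional isotropic subspace w of (ZMod 2)^{2n}, one has |L^n_1| · |{x ∈ L^n_n : w ⊆ x}| = |L^n_n| · (2^n − 1). In particular the number of maximal isotropic subspaces containing w equals |L^n_n|(2^n − 1)/|L^n_1|, independently of w. -/
set_option maxRecDepth 100000


open Finset

lemma symp_add_left {n : ℕ} (a b c : PV n) : symp (a + b) c = symp a c + symp b c := by
  simp [symp, add_mul, Finset.sum_add_distrib]; abel

lemma symp_add_right {n : ℕ} (a b c : PV n) : symp a (b + c) = symp a b + symp a c := by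
  simp [symp, mul_add, Finset.sum_add_distrib]; abel

lemma symp_comm {n : ℕ} (a b : PV n) : symp a b = symp b a := by
  simp [symp, mul_comm]; abel

lemma symp_smul_left {n : ℕ} (c : F2) (a b : PV n) : symp (c • a) b = c * symp a b := by
  simp only [symp, Prod.smul_fst, Prod.smul_snd, Pi.smul_apply, smul_eq_mul, mul_assoc,
    ← Finset.mul_sum, mul_add]

lemma symp_smul_right {n : ℕ} (c : F2) (a b : PV n) : symp a (c • b) = c * symp a b := by
  rw [symp_comm, symp_smul_left, symp_comm]

lemma symp_self {n : ℕ} (a : PV n) : symp a a = 0 := by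
  have h : (∑ i, a.2 i * a.1 i) = ∑ i, a.1 i * a.2 i := by
    simp [mul_comm]
  rw [symp, h, ← two_mul]
  have : (2 : F2) = 0 := by decide
  rw [this, zero_mul]

lemma symp_zero_left {n : ℕ} (a : PV n) : symp 0 a = 0 := by
  simp [symp]

/-- Transvection along `a` as a linear map. -/
def tvLin {n : ℕ} (a : PV n) : PV n →ₗ[F2] PV n where
  toFun x := x + symp x a • a
  map_add' x y := by
    simp only [symp_add_left, add_smul]; abel
  map_smul' c x := by
    rcases (by decide : ∀ c : F2, c = 0 ∨ c = 1) c with h | h <;> subst h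
    · show (0:F2) • x + symp ((0:F2) • x) a • a = (0:F2) • (x + symp x a • a)
      rw [zero_smul, zero_smul, symp_zero_left, zero_smul, add_zero]
    · show (1:F2) • x + symp ((1:F2) • x) a • a = (1:F2) • (x + symp x a • a)
      rw [one_smul, one_smul]

lemma tv_invol {n : ℕ} (a : PV n) (x : PV n) : tvLin a (tvLin a x) = x := by
  simp only [tvLin, LinearMap.coe_mk, AddHom.coe_mk]
  rw [symp_add_left, symp_smul_left, symp_self, mul_zero, add_zero, add_assoc, ← add_smul]
  have : symp x a + symp x a = 0 := by
    rcases (by decide : ∀ c : F2, c + c = 0) (symp x a) with h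
    exact h
  rw [this, zero_smul, add_zero]

/-- Transvection as a linear equivalence. -/
def tv {n : ℕ} (a : PV n) : PV n ≃ₗ[F2] PV n :=
  LinearEquiv.ofLinear (tvLin a) (tvLin a)
    (by ext x <;> simp [tv_invol]) (by ext x <;> simp [tv_invol])

lemma tv_apply {n : ℕ} (a x : PV n) : tv a x = x + symp x a • a := rfl

lemma tv_symp {n : ℕ} (a x y : PV n) : symp (tv a x) (tv a y) = symp x y := by
  simp only [tv_apply, symp_add_left, symp_add_right, symp_smul_left, symp_smul_right,
    symp_self, mul_zero]
  rw [symp_comm a y]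
  generalize symp x y = e
  generalize symp x a = p
  generalize symp y a = q
  revert e p q
  decide

lemma symp_e2 {n : ℕ} (u : PV n) (i : Fin n) : symp u (0, Pi.single i 1) = u.1 i := by
  simp [symp, Pi.single_apply, mul_ite, Finset.sum_ite_eq']

lemma symp_e1 {n : ℕ} (u : PV n) (i : Fin n) : symp u (Pi.single i 1, 0) = u.2 i := by
  simp [symp, Pi.single_apply, mul_ite, Finset.sum_ite_eq']

lemma exists_symp_one {n : ℕ} (u : PV n) (hu : u ≠ 0) : ∃ z, symp u z = 1 := by
  by_cases h1 : u.1 = 0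
  · have h2 : u.2 ≠ 0 := by
      intro h2; exact hu (Prod.ext h1 h2)
    obtain ⟨i, hi⟩ := Function.ne_iff.mp h2
    refine ⟨(Pi.single i 1, 0), ?_⟩
    rw [symp_e1]
    rcases (by decide : ∀ c : F2, c = 0 ∨ c = 1) (u.2 i) with h | h
    · exact absurd h hi
    · exact h
  · obtain ⟨i, hi⟩ := Function.ne_iff.mp h1
    refine ⟨(0, Pi.single i 1), ?_⟩
    rw [symp_e2]
    rcases (by decide : ∀ c : F2, c = 0 ∨ c = 1) (u.1 i) with h | h
    · exact absurd h hi
    · exact h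

lemma add_self_pv {n : ℕ} (u : PV n) : u + u = 0 := by
  rw [← one_smul F2 u, ← add_smul, (by decide : (1 + 1 : F2) = 0), zero_smul]

lemma tv_swap {n : ℕ} {u z : PV n} (h : symp u z = 1) : tv (u + z) u = z := by
  rw [tv_apply, symp_add_right, symp_self, zero_add, h, one_smul, ← add_assoc,
    add_self_pv, zero_add]

lemma exists_common {n : ℕ} (u v : PV n) (hu : u ≠ 0) (hv : v ≠ 0) :
    ∃ z, symp u z = 1 ∧ symp v z = 1 := by
  obtain ⟨a, ha⟩ := exists_symp_one u hu
  obtain ⟨c, hc⟩ := exists_symp_one v hv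
  rcases (by decide : ∀ x : F2, x = 0 ∨ x = 1) (symp v a) with h1 | h1
  · rcases (by decide : ∀ x : F2, x = 0 ∨ x = 1) (symp u c) with h2 | h2
    · exact ⟨a + c, by rw [symp_add_right, ha, h2, add_zero],
        by rw [symp_add_right, h1, hc, zero_add]⟩
    · exact ⟨c, h2, hc⟩
  · exact ⟨a, ha, h1⟩

lemma exists_sympl_map {n : ℕ} (u v : PV n) (hu : u ≠ 0) (hv : v ≠ 0) :
    ∃ g : PV n ≃ₗ[F2] PV n, (∀ x y, symp (g x) (g y) = symp x y) ∧ g u = v := by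
  by_cases huv : u = v
  · exact ⟨LinearEquiv.refl F2 (PV n), fun x y => rfl, huv⟩
  rcases (by decide : ∀ x : F2, x = 0 ∨ x = 1) (symp u v) with h | h
  · obtain ⟨z, hz1, hz2⟩ := exists_common u v hu hv
    refine ⟨(tv (u + z)).trans (tv (v + z)), fun x y => by
      show symp (tv (v+z) (tv (u+z) x)) (tv (v+z) (tv (u+z) y)) = symp x y
      rw [tv_symp, tv_symp], ?_⟩
    show tv (v + z) (tv (u + z) u) = v
    rw [tv_swap hz1]
    have : tv (v + z) v = z := tv_swap hz2
    calc tv (v + z) z = tv (v + z) (tv (v + z) v) := by rw [this]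
      _ = v := by
        have := tv_invol (v + z) v
        simpa [tv] using this
  · exact ⟨tv (u + v), fun x y => tv_symp _ _ _, tv_swap h⟩

lemma span_singleton_isotropic {n : ℕ} (u : PV n) :
    IsIsotropic (Submodule.span F2 {u}) := by
  intro x hx y hy
  obtain ⟨c, rfl⟩ := Submodule.mem_span_singleton.mp hx
  obtain ⟨d, rfl⟩ := Submodule.mem_span_singleton.mp hy
  rw [symp_smul_left, symp_smul_right, symp_self, mul_zero, mul_zero]

lemma span_singleton_mem_L1 {n : ℕ} (u : PV n) (hu : u ≠ 0) :
    Submodule.span F2 {u} ∈ Lset n 1 :=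
  ⟨span_singleton_isotropic u, finrank_span_singleton hu⟩

lemma L1_eq_span {n : ℕ} (w : Submodule F2 (PV n)) (hw : w ∈ Lset n 1) :
    ∃ u : PV n, u ≠ 0 ∧ w = Submodule.span F2 {u} := by
  have hbot : w ≠ ⊥ := by
    intro h
    rw [h] at hw
    simpa using hw.2
  obtain ⟨u, hu, hu0⟩ := Submodule.exists_mem_ne_zero_of_ne_bot hbot
  refine ⟨u, hu0, ?_⟩
  have hle : Submodule.span F2 {u} ≤ w := Submodule.span_singleton_le_iff_mem u w |>.mpr hu
  exact (Submodule.eq_of_le_of_finrank_eq hle (by rw [finrank_span_singleton hu0, hw.2])).symm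

lemma map_mem_Lset {n k : ℕ} (g : PV n ≃ₗ[F2] PV n) (hg : ∀ x y, symp (g x) (g y) = symp x y)
    (S : Submodule F2 (PV n)) (hS : S ∈ Lset n k) :
    Submodule.map (g : PV n →ₗ[F2] PV n) S ∈ Lset n k := by
  constructor
  · intro x hx y hy
    obtain ⟨x', hx', rfl⟩ := hx
    obtain ⟨y', hy', rfl⟩ := hy
    simp only [LinearEquiv.coe_coe]
    rw [hg]
    exact hS.1 x' hx' y' hy'
  · rw [LinearEquiv.finrank_map_eq]
    exact hS.2

lemma map_map_symm {n : ℕ} (g : PV n ≃ₗ[F2] PV n) (S : Submodule F2 (PV n)) :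
    Submodule.map (g.symm : PV n →ₗ[F2] PV n)
      (Submodule.map (g : PV n →ₗ[F2] PV n) S) = S := by
  ext v
  simp [Submodule.mem_map]

lemma card_above_eq {n : ℕ} (w w' : Submodule F2 (PV n)) (hw : w ∈ Lset n 1)
    (hw' : w' ∈ Lset n 1) :
    Nat.card {x : Submodule F2 (PV n) | x ∈ Lset n n ∧ w ≤ x} =
      Nat.card {x : Submodule F2 (PV n) | x ∈ Lset n n ∧ w' ≤ x} := by
  obtain ⟨u, hu0, rfl⟩ := L1_eq_span w hw
  obtain ⟨u', hu0', rfl⟩ := L1_eq_span w' hw'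
  obtain ⟨g, hg, hgu⟩ := exists_sympl_map u u' hu0 hu0'
  have hg' : ∀ x y, symp (g.symm x) (g.symm y) = symp x y := fun x y => by
    simpa using (hg (g.symm x) (g.symm y)).symm
  have hmapw : Submodule.map (g : PV n →ₗ[F2] PV n) (Submodule.span F2 {u}) =
      Submodule.span F2 {u'} := by
    rw [Submodule.map_span]
    simp [hgu]
  apply Nat.card_congr
  refine Equiv.subtypeEquiv (Submodule.orderIsoMapComap g).toEquiv ?_
  intro x
  have hco : ∀ S : Submodule F2 (PV n), ((Submodule.orderIsoMapComap g).toEquiv S) =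
      Submodule.map (g : PV n →ₗ[F2] PV n) S := fun S => rfl
  simp only [Set.mem_setOf_eq, hco]
  constructor
  · rintro ⟨h1, h2⟩
    refine ⟨map_mem_Lset g hg x h1, ?_⟩
    rw [← hmapw]
    exact Submodule.map_mono h2
  · rintro ⟨h1, h2⟩
    have e1 := map_mem_Lset g.symm hg' _ h1
    rw [map_map_symm] at e1
    refine ⟨e1, ?_⟩
    have := Submodule.map_mono (f := (g.symm : PV n →ₗ[F2] PV n)) h2
    rw [map_map_symm, ← hmapw, map_map_symm] at this
    exact this

lemma card_lines_below {n : ℕ} (x : Submodule F2 (PV n)) (hx : x ∈ Lset n n) :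
    Nat.card {w : Submodule F2 (PV n) | w ∈ Lset n 1 ∧ w ≤ x} = 2 ^ n - 1 := by
  classical
  have hf : Function.Bijective
      (fun u : {u : x // (u : PV n) ≠ 0} =>
        (⟨Submodule.span F2 {(u : PV n)},
          span_singleton_mem_L1 _ u.2,
          (Submodule.span_singleton_le_iff_mem _ _).mpr u.1.2⟩ :
          {w : Submodule F2 (PV n) // w ∈ Lset n 1 ∧ w ≤ x})) := by
    constructor
    · rintro ⟨⟨u, hux⟩, hu0⟩ ⟨⟨v, hvx⟩, hv0⟩ h
      simp only [Subtype.mk.injEq] at h ⊢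
      have hv : v ∈ Submodule.span F2 {u} := by
        rw [h]
        exact Submodule.mem_span_singleton_self v
      obtain ⟨c, hc⟩ := Submodule.mem_span_singleton.mp hv
      rcases (by decide : ∀ c : F2, c = 0 ∨ c = 1) c with rfl | rfl
      · rw [zero_smul] at hc
        exact absurd hc.symm hv0
      · rw [one_smul] at hc
        exact hc
    · rintro ⟨w, hw1, hwle⟩
      obtain ⟨u, hu0, rfl⟩ := L1_eq_span w hw1
      have hux : u ∈ x := hwle (Submodule.mem_span_singleton_self u)
      exact ⟨⟨⟨u, hux⟩, hu0⟩, rfl⟩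
  have h1 : Nat.card {w : Submodule F2 (PV n) | w ∈ Lset n 1 ∧ w ≤ x} =
      Nat.card {u : x // (u : PV n) ≠ 0} :=
    (Nat.card_congr (Equiv.ofBijective _ hf)).symm
  rw [h1]
  haveI : Fintype x := Fintype.ofFinite _
  have hcard : Fintype.card x = 2 ^ n := by
    rw [Module.card_eq_pow_finrank (K := F2) (V := x), hx.2, ZMod.card]
  have hne : ∀ u : x, (u : PV n) ≠ 0 ↔ u ≠ 0 := by
    intro u
    simp [Submodule.coe_eq_zero]
  rw [Nat.card_eq_fintype_card]
  have : Fintype.card {u : x // (u : PV n) ≠ 0} = Fintype.card {u : x // u ≠ 0} := by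
    apply Fintype.card_congr
    exact Equiv.subtypeEquivRight hne
  rw [this]
  have h2 : Fintype.card {u : x // u ≠ 0} = Fintype.card x - Fintype.card {u : x // u = 0} :=
    Fintype.card_subtype_compl _
  rw [h2, Fintype.card_subtype_eq (0 : x), hcard]

/-- Double counting: `|L^n_1| · |{x ∈ L^n_n : w ⊆ x}| = |L^n_n| · (2^n − 1)`, for every
one-dimensional isotropic subspace `w`; in particular the number of maximal isotropic
subspaces containing `w` does not depend on `w`. -/
theorem count_maximal_above_line :
    ∀ n : ℕ, 1 ≤ n → ∀ w ∈ Lset n 1,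
      Nat.card (Lset n 1) * Nat.card {x : Submodule F2 (PV n) | x ∈ Lset n n ∧ w ≤ x} =
        Nat.card (Lset n n) * (2 ^ n - 1) := by
  intro n hn w hw
  classical
  haveI : Finite (Submodule F2 (PV n)) :=
    Finite.of_injective (fun S : Submodule F2 (PV n) => (S : Set (PV n))) SetLike.coe_injective
  haveI : Fintype (Submodule F2 (PV n)) := Fintype.ofFinite _
  have key : ∀ (s : Set (Submodule F2 (PV n))),
      Nat.card s = (Finset.univ.filter (· ∈ s)).card := by
    intro s
    rw [Nat.card_eq_fintype_card, Fintype.card_subtype]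
  set L1 : Finset (Submodule F2 (PV n)) := Finset.univ.filter (· ∈ Lset n 1) with hL1
  set Ln : Finset (Submodule F2 (PV n)) := Finset.univ.filter (· ∈ Lset n n) with hLn
  have hdc : ∑ w' ∈ L1, (Ln.filter (fun x => w' ≤ x)).card =
      ∑ x ∈ Ln, (L1.filter (fun w' => w' ≤ x)).card := by
    simp only [Finset.card_filter]
    exact Finset.sum_comm
  have hlhs : ∑ w' ∈ L1, (Ln.filter (fun x => w' ≤ x)).card =
      L1.card * Nat.card {x : Submodule F2 (PV n) | x ∈ Lset n n ∧ w ≤ x} := by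
    rw [Finset.sum_congr rfl (fun w' hw' => ?_), Finset.sum_const, smul_eq_mul]
    have hw'1 : w' ∈ Lset n 1 := (Finset.mem_filter.mp hw').2
    rw [card_above_eq w w' hw hw'1, key]
    congr 1
    ext x
    simp [hLn, Finset.mem_filter, and_assoc]
  have hrhs : ∑ x ∈ Ln, (L1.filter (fun w' => w' ≤ x)).card = Ln.card * (2 ^ n - 1) := by
    rw [Finset.sum_congr rfl (fun x hx => ?_), Finset.sum_const, smul_eq_mul]
    have hxn : x ∈ Lset n n := (Finset.mem_filter.mp hx).2
    rw [← card_lines_below x hxn, key]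
    congr 1
    ext w'
    simp [hL1, Finset.mem_filter, and_assoc]
  rw [key (Lset n 1), key (Lset n n), ← hL1, ← hLn, ← hlhs, hdc, hrhs]
end

section
/- For n > 8, the largest eigenvalue Δ of the adjacency matrix of the bipartite containment graph B_{n,2} satisfies Δ² ≥ 2^{3(n−3) + (n−2)(n−3)/2}. -/
open Finset

open scoped Classical

noncomputable instance {n : ℕ} : Fintype (Submodule F2 (PV n)) := by
  have : Finite (Submodule F2 (PV n)) :=
    Finite.of_injective (fun S => (S : Set (PV n))) SetLike.coe_injective
  exact Fintype.ofFinite _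

/-- Adjacency matrix (over `ℝ`) of the graph with adjacency relation `Adj`. -/
noncomputable def adjMat {V : Type*} [Fintype V] (Adj : V → V → Prop) : Matrix V V ℝ :=
  fun x y => if Adj x y then 1 else 0

/-- The set of eigenvalues of a matrix. -/
def eigSet {V : Type*} [Fintype V] (A : Matrix V V ℝ) : Set ℝ :=
  {μ | ∃ v : V → ℝ, v ≠ 0 ∧ A.mulVec v = μ • v}

/-- The largest eigenvalue. -/
noncomputable def maxEig {V : Type*} [Fintype V] (A : Matrix V V ℝ) : ℝ :=
  sSup (eigSet A)

/-- The spectral parameter: the second largest element of `{|μ| : μ ∈ Spec(A)}`. -/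
noncomputable def specParam {V : Type*} [Fintype V] (A : Matrix V V ℝ) : ℝ :=
  sSup ((abs '' eigSet A) \ {sSup (abs '' eigSet A)})

/-- Vertices of the bipartite graph `B_{n,2}`: `L^n_n ∪ L^n_2`. -/
abbrev BVtx (n : ℕ) := {S : Submodule F2 (PV n) // S ∈ Lset n n ∪ Lset n 2}

/-- Adjacency in `B_{n,2}`: `x ∈ L^n_n` is adjacent to `t ∈ L^n_2` iff `t ⊊ x`. -/
def BAdj {n : ℕ} (x y : BVtx n) : Prop :=
  (x.1 ∈ Lset n 2 ∧ y.1 ∈ Lset n n ∧ x.1 < y.1) ∨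
  (y.1 ∈ Lset n 2 ∧ x.1 ∈ Lset n n ∧ y.1 < x.1)

/-- The adjacency matrix of `B_{n,2}`. -/
noncomputable def adjB (n : ℕ) : Matrix (BVtx n) (BVtx n) ℝ := adjMat BAdj

/-! ### Auxiliary spectral lemmas -/

section Spectral
variable {V : Type*} [Fintype V]

lemma eigSet_bddAbove (A : Matrix V V ℝ) : BddAbove (eigSet A) := by
  refine ⟨∑ p : V × V, |A p.1 p.2|, ?_⟩
  rintro μ ⟨v, hv0, hv⟩
  obtain ⟨j, hj⟩ := Function.ne_iff.mp hv0
  have : Nonempty V := ⟨j⟩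
  obtain ⟨i, -, hi⟩ := Finset.exists_max_image Finset.univ (fun j => |v j|) ⟨j, Finset.mem_univ j⟩
  have hvi : 0 < |v i| := lt_of_lt_of_le (abs_pos.mpr hj) (hi j (Finset.mem_univ j))
  have h2 : μ * v i = ∑ k, A i k * v k := by
    have h := congrFun hv i
    simp only [Matrix.mulVec, dotProduct, Pi.smul_apply, smul_eq_mul] at h
    exact h.symm
  have h1 : |μ| * |v i| ≤ (∑ k, |A i k|) * |v i| := by
    calc |μ| * |v i| = |∑ k, A i k * v k| := by rw [← abs_mul, h2]
    _ ≤ ∑ k, |A i k * v k| := Finset.abs_sum_le_sum_abs _ _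
    _ ≤ ∑ k, |A i k| * |v i| := by
        refine Finset.sum_le_sum fun k _ => ?_
        rw [abs_mul]
        exact mul_le_mul_of_nonneg_left (hi k (Finset.mem_univ k)) (abs_nonneg _)
    _ = (∑ k, |A i k|) * |v i| := by rw [Finset.sum_mul]
  have hμ : |μ| ≤ ∑ k, |A i k| := le_of_mul_le_mul_right h1 hvi
  calc μ ≤ |μ| := le_abs_self μ
  _ ≤ ∑ k, |A i k| := hμ
  _ ≤ ∑ p : V × V, |A p.1 p.2| := by
      rw [Fintype.sum_prod_type]
      exact Finset.single_le_sum (f := fun i' => ∑ k, |A i' k|)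
        (fun _ _ => Finset.sum_nonneg fun _ _ => abs_nonneg _) (Finset.mem_univ i)

lemma rayleigh_le_maxEig [DecidableEq V] [Nonempty V] (A : Matrix V V ℝ)
    (hA : A.IsHermitian) (v : V → ℝ) :
    ∑ i, v i * A.mulVec v i ≤ maxEig A * ∑ i, v i * v i := by
  obtain ⟨i₀, hi₀⟩ := Finite.exists_max hA.eigenvalues
  have hmem : hA.eigenvalues i₀ ∈ eigSet A :=
    ⟨hA.eigenvectorBasis i₀, by simpa using hA.eigenvectorBasis.orthonormal.ne_zero i₀,
      hA.mulVec_eigenvectorBasis i₀⟩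
  have hle : hA.eigenvalues i₀ ≤ maxEig A := le_csSup (eigSet_bddAbove A) hmem
  set b := hA.eigenvectorBasis with hb
  set lam := hA.eigenvalues with hlam
  have key : ∀ i, A.mulVec (b i) = lam i • (b i) := fun i => hA.mulVec_eigenvectorBasis i
  set v' : EuclideanSpace ℝ V := WithLp.toLp 2 v with hv'
  set c : V → ℝ := fun i => inner ℝ (b i) v' with hc
  have hrepr : ∑ i, c i • b i = v' := b.sum_repr' v'
  have hinner : ∀ x y : EuclideanSpace ℝ V, (inner ℝ x y : ℝ) = ∑ i, x i * y i := by
    intro x y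
    simp [PiLp.inner_apply, RCLike.inner_apply, mul_comm]
  have hAv : WithLp.toLp 2 (A.mulVec v) = ∑ i, (lam i * c i) • b i := by
    have h0 : A.mulVec v = A.mulVecLin (∑ i, c i • ⇑(b i)) := by
      rw [show v = v'.ofLp from rfl, ← hrepr]; simp [WithLp.ofLp_sum, WithLp.ofLp_smul, Matrix.mulVec_sum, Matrix.mulVec_smul]
    apply WithLp.ofLp_injective 2
    rw [WithLp.ofLp_toLp, h0, map_sum, WithLp.ofLp_sum]
    refine Finset.sum_congr rfl fun i _ => ?_
    rw [map_smul, Matrix.mulVecLin_apply, key i, smul_smul, mul_comm, WithLp.ofLp_smul]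
  have hcomm : ∀ i, (inner ℝ v' (b i) : ℝ) = c i := fun i => real_inner_comm _ _
  have hL : ∑ i, v i * A.mulVec v i = ∑ i, lam i * (c i * c i) := by
    rw [show ∑ i, v i * A.mulVec v i = inner ℝ v' (WithLp.toLp 2 (A.mulVec v)) from (hinner v' (WithLp.toLp 2 (A.mulVec v))).symm, hAv, inner_sum]
    refine Finset.sum_congr rfl fun i _ => ?_
    rw [real_inner_smul_right, hcomm i]; ring
  have hR : ∑ i, v i * v i = ∑ i, c i * c i := by
    rw [show ∑ i, v i * v i = inner ℝ v' v' from (hinner v' v').symm]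
    conv_lhs => rw [← hrepr]
    rw [inner_sum]
    refine Finset.sum_congr rfl fun i _ => ?_
    rw [real_inner_smul_right, hrepr, hcomm i]
  rw [hL, hR]
  have hsq : (0:ℝ) ≤ ∑ i, c i * c i := Finset.sum_nonneg fun i _ => mul_self_nonneg _
  calc ∑ i, lam i * (c i * c i) ≤ ∑ i, lam i₀ * (c i * c i) :=
        Finset.sum_le_sum fun i _ => mul_le_mul_of_nonneg_right (hi₀ i) (mul_self_nonneg _)
  _ = lam i₀ * ∑ i, c i * c i := by rw [Finset.mul_sum]
  _ ≤ maxEig A * ∑ i, c i * c i := mul_le_mul_of_nonneg_right hle hsq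

end Spectral

/-! ### The construction: graph Lagrangians of symmetric matrices -/

section Constr
variable {n : ℕ}

def symMat (s : Sym2 (Fin n) → F2) : Matrix (Fin n) (Fin n) F2 :=
  fun i j => s s(i, j)

lemma symMat_symm (s : Sym2 (Fin n) → F2) (i j : Fin n) : symMat s i j = symMat s j i := by
  simp [symMat, Sym2.eq_swap]

def lagr (s : Sym2 (Fin n) → F2) : Submodule F2 (PV n) :=
  LinearMap.graph (Matrix.mulVecLin (symMat s))

lemma mem_lagr {s : Sym2 (Fin n) → F2} {x : PV n} :
    x ∈ lagr s ↔ x.2 = (symMat s).mulVec x.1 := by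
  simp [lagr, LinearMap.mem_graph_iff, Matrix.mulVecLin_apply]

lemma lagr_isotropic (s : Sym2 (Fin n) → F2) : IsIsotropic (lagr s) := by
  intro x hx y hy
  rw [mem_lagr] at hx hy
  unfold symp
  rw [hx, hy]
  have e1 : ∑ i, x.1 i * (symMat s).mulVec y.1 i
      = ∑ i, ∑ j, x.1 i * (symMat s i j * y.1 j) := by
    simp [Matrix.mulVec, dotProduct, Finset.mul_sum]
  have e2 : ∑ i, (symMat s).mulVec x.1 i * y.1 i
      = ∑ i, ∑ j, x.1 i * (symMat s i j * y.1 j) := by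
    simp only [Matrix.mulVec, dotProduct, Finset.sum_mul]
    rw [Finset.sum_comm]
    refine Finset.sum_congr rfl fun i _ => Finset.sum_congr rfl fun j _ => ?_
    rw [symMat_symm s j i]; ring
  rw [e1, e2, CharTwo.add_self_eq_zero]

lemma finrank_lagr (s : Sym2 (Fin n) → F2) : Module.finrank F2 (lagr s) = n := by
  have hinj : Function.Injective (LinearMap.prod LinearMap.id (Matrix.mulVecLin (symMat s))) := by
    intro a b hab
    simpa using congrArg Prod.fst hab
  rw [lagr, LinearMap.graph_eq_range_prod]
  rw [← (LinearEquiv.ofInjective _ hinj).finrank_eq]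
  simp [Module.finrank_pi]

lemma lagr_injective : Function.Injective (lagr (n := n)) := by
  intro s s' h
  have hcol : ∀ j i : Fin n, symMat s i j = symMat s' i j := by
    intro j i
    have hm : ((Pi.single j 1 : Fin n → F2), (symMat s).mulVec (Pi.single j 1)) ∈ lagr s :=
      mem_lagr.mpr rfl
    rw [h, mem_lagr] at hm
    have h2 := congrFun hm i
    simpa [Matrix.mulVec_single] using h2
  funext z
  induction z using Sym2.ind with
  | _ i j => exact hcol j i

variable (i0 i1 : Fin n)

def extF (f : {i : Fin n // i ≠ i0 ∧ i ≠ i1} → F2) : Fin n → F2 :=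
  fun i => if h : i ≠ i0 ∧ i ≠ i1 then f ⟨i, h⟩ else 0

lemma extF_injective : Function.Injective (extF i0 i1) := by
  intro f g h
  funext i
  have := congrFun h i.1
  simpa [extF, i.2] using this

lemma extF_i0 (f) : extF i0 i1 f i0 = 0 := by simp [extF]

lemma extF_i1 (f) : extF i0 i1 f i1 = 0 := by simp [extF]

def u1 (p : {i : Fin n // i ≠ i0 ∧ i ≠ i1} → F2) : Fin n → F2 :=
  Pi.single i0 1 + extF i0 i1 p

def u2 (q : {i : Fin n // i ≠ i0 ∧ i ≠ i1} → F2) : Fin n → F2 :=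
  Pi.single i1 1 + extF i0 i1 q

variable {i0 i1}

lemma u1_i0 (p) : u1 i0 i1 p i0 = 1 := by
  simp [u1, extF_i0]

lemma u1_i1 (h01 : i0 ≠ i1) (p) : u1 i0 i1 p i1 = 0 := by
  simp [u1, extF_i1, Pi.single_eq_of_ne (Ne.symm h01)]

lemma u2_i0 (h01 : i0 ≠ i1) (q) : u2 i0 i1 q i0 = 0 := by
  simp [u2, extF_i0, Pi.single_eq_of_ne h01]

lemma u2_i1 (q) : u2 i0 i1 q i1 = 1 := by
  simp [u2, extF_i1]

variable (i0 i1)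

def gvec (s : Sym2 (Fin n) → F2) (v : Fin n → F2) : PV n := (v, (symMat s).mulVec v)

lemma gvec_mem (s : Sym2 (Fin n) → F2) (v : Fin n → F2) : gvec s v ∈ lagr s := mem_lagr.mpr rfl

def tspan (s : Sym2 (Fin n) → F2) (p q : {i : Fin n // i ≠ i0 ∧ i ≠ i1} → F2) :
    Submodule F2 (PV n) :=
  Submodule.span F2 {gvec s (u1 i0 i1 p), gvec s (u2 i0 i1 q)}

lemma tspan_le (s p q) : tspan i0 i1 s p q ≤ lagr s := by
  rw [tspan, Submodule.span_le]
  rintro x hx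
  rcases hx with rfl | rfl
  · exact gvec_mem s _
  · exact gvec_mem s _

variable {i0 i1}

lemma tspan_li (h01 : i0 ≠ i1) (s p q) :
    LinearIndependent F2 ![gvec s (u1 i0 i1 p), gvec s (u2 i0 i1 q)] := by
  rw [LinearIndependent.pair_iff]
  intro c d hcd
  have hfst := congrArg Prod.fst hcd
  simp only [gvec, Prod.fst_add, Prod.smul_fst, Prod.fst_zero] at hfst
  constructor
  · have := congrFun hfst i0
    simpa [u1_i0, u2_i0 h01] using this
  · have := congrFun hfst i1
    simpa [u1_i1 h01, u2_i1] using this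

lemma finrank_tspan (h01 : i0 ≠ i1) (s p q) :
    Module.finrank F2 (tspan i0 i1 s p q) = 2 := by
  have h := finrank_span_eq_card (tspan_li h01 s p q)
  have hr : Set.range ![gvec s (u1 i0 i1 p), gvec s (u2 i0 i1 q)]
      = {gvec s (u1 i0 i1 p), gvec s (u2 i0 i1 q)} := by
    ext z
    simp only [Set.mem_range, Fin.exists_fin_two, Set.mem_insert_iff, Set.mem_singleton_iff]
    simp only [Matrix.cons_val_zero, Matrix.cons_val_one, Matrix.head_cons]
    tauto
  rw [hr, Fintype.card_fin] at h
  exact h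

lemma tspan_isotropic (s p q) : IsIsotropic (tspan i0 i1 s p q) := by
  intro x hx y hy
  exact lagr_isotropic s x (tspan_le i0 i1 s p q hx) y (tspan_le i0 i1 s p q hy)

lemma tspan_inj (h01 : i0 ≠ i1) {s : Sym2 (Fin n) → F2} {p q p' q'}
    (h : tspan i0 i1 s p q = tspan i0 i1 s p' q') : p = p' ∧ q = q' := by
  constructor
  · have h1 : gvec s (u1 i0 i1 p') ∈ tspan i0 i1 s p q := by
      rw [h]
      exact Submodule.subset_span (Set.mem_insert _ _)
    rw [tspan, Submodule.mem_span_pair] at h1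
    obtain ⟨c, d, hcd⟩ := h1
    have hfst := congrArg Prod.fst hcd
    simp only [gvec, Prod.fst_add, Prod.smul_fst] at hfst
    have hc : c = 1 := by
      have := congrFun hfst i0
      simpa [u1_i0, u2_i0 h01] using this
    have hd : d = 0 := by
      have := congrFun hfst i1
      simpa [u1_i1 h01, u2_i1] using this
    rw [hc, hd, one_smul, zero_smul, add_zero] at hfst
    exact extF_injective i0 i1 (by
      have := hfst
      rwa [u1, u1, add_right_inj] at this)
  · have h1 : gvec s (u2 i0 i1 q') ∈ tspan i0 i1 s p q := by
      rw [h]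
      exact Submodule.subset_span (Set.mem_insert_of_mem _ rfl)
    rw [tspan, Submodule.mem_span_pair] at h1
    obtain ⟨c, d, hcd⟩ := h1
    have hfst := congrArg Prod.fst hcd
    simp only [gvec, Prod.fst_add, Prod.smul_fst] at hfst
    have hc : c = 0 := by
      have := congrFun hfst i0
      simpa [u1_i0, u2_i0 h01] using this
    have hd : d = 1 := by
      have := congrFun hfst i1
      simpa [u1_i1 h01, u2_i1] using this
    rw [hc, hd, one_smul, zero_smul, zero_add] at hfst
    exact extF_injective i0 i1 (by
      have := hfst
      rwa [u2, u2, add_right_inj] at this)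

lemma card_idx (h01 : i0 ≠ i1) : Fintype.card {i : Fin n // i ≠ i0 ∧ i ≠ i1} = n - 2 := by
  classical
  rw [Fintype.card_subtype]
  have hfe : Finset.univ.filter (fun i : Fin n => i ≠ i0 ∧ i ≠ i1)
      = Finset.univ \ {i0, i1} := by
    ext i
    simp [not_or]
  rw [hfe, Finset.card_sdiff_of_subset (Finset.subset_univ _), Finset.card_pair h01,
    Finset.card_univ, Fintype.card_fin]

end Constr

set_option maxHeartbeats 1600000 in
/-- For `n > 8`, the largest eigenvalue `Δ` of the adjacency matrix of `B_{n,2}` satisfies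
`Δ² ≥ 2^{3(n−3) + (n−2)(n−3)/2}`. -/
theorem maxEig_B_sq_ge :
    ∀ n : ℕ, 8 < n →
      (maxEig (adjB n)) ^ 2 ≥ (2 : ℝ) ^ (3 * (n - 3) + (n - 2) * (n - 3) / 2) := by
  intro n hn
  classical
  obtain ⟨a, rfl⟩ : ∃ a, n = a + 9 := ⟨n - 9, by omega⟩
  set n := a + 9 with hn9
  rw [show n - 3 = a + 6 by omega, show n - 2 = a + 7 by omega]
  set t' := 3 * (a + 6) + (a + 7) * (a + 6) / 2 with ht'def
  -- index pair
  set i0 : Fin n := ⟨0, by omega⟩ with hi0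
  set i1 : Fin n := ⟨1, by omega⟩ with hi1
  have h01 : i0 ≠ i1 := by simp [hi0, hi1, Fin.ext_iff]
  set s2 := Fintype.card (Sym2 (Fin n)) with hs2def
  have hcard2 : Fintype.card F2 = 2 := ZMod.card 2
  have hcIdx : Fintype.card {i : Fin n // i ≠ i0 ∧ i ≠ i1} = a + 7 := by
    rw [card_idx h01]; omega
  -- numeric facts about s2 and t'
  have hdvd : 2 ∣ (a + 7) * (a + 6) := by
    rcases Nat.even_or_odd a with ⟨b, hb⟩ | ⟨b, hb⟩
    · exact ⟨(2 * b + 7) * (b + 3), by rw [hb]; ring⟩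
    · exact ⟨(b + 4) * (2 * b + 7), by rw [hb]; ring⟩
  have hD : 2 * ((a + 7) * (a + 6) / 2) = (a + 7) * (a + 6) := Nat.mul_div_cancel' hdvd
  have h2s2 : 2 * s2 = (a + 7) * (a + 6) + (6 * a + 48) := by
    rw [hs2def, Sym2.card, Fintype.card_fin, Nat.choose_two_right, Nat.add_sub_cancel,
      Nat.mul_div_cancel' (by rw [Nat.mul_comm]; exact (Nat.even_mul_succ_self n).two_dvd)]
    rw [hn9]; ring
  have ht' : t' + 6 = s2 := by
    rw [ht'def]
    generalize (a + 7) * (a + 6) = D2 at hD h2s2 ⊢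
    omega
  have hexp : (a + 7) * (a + 6) = a * a + 13 * a + 42 := by ring
  have hs2low : 4 * a + 37 ≤ s2 := by
    rw [← ht', ht'def]
    generalize (a + 7) * (a + 6) = D2 at hexp hD ⊢
    generalize a * a = A at hexp
    omega
  obtain ⟨k, hk1, hk2⟩ : ∃ k, s2 + 4 ≤ 2 * k + (4 * a + 36) ∧ 2 * k + (4 * a + 36) ≤ s2 + 5 :=
    ⟨(s2 + 5 - (4 * a + 36)) / 2, by omega, by omega⟩
  -- vertices
  have hlagrM : ∀ s, lagr s ∈ Lset n n ∪ Lset n 2 :=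
    fun s => Or.inl ⟨lagr_isotropic s, finrank_lagr s⟩
  have htspM : ∀ s p q, tspan i0 i1 s p q ∈ Lset n n ∪ Lset n 2 :=
    fun s p q => Or.inr ⟨tspan_isotropic s p q, finrank_tspan h01 s p q⟩
  set xv : (Sym2 (Fin n) → F2) → BVtx n := fun s => ⟨lagr s, hlagrM s⟩ with hxv
  set tv : (Sym2 (Fin n) → F2) × ({i : Fin n // i ≠ i0 ∧ i ≠ i1} → F2) ×
      ({i : Fin n // i ≠ i0 ∧ i ≠ i1} → F2) → BVtx n :=
    fun spq => ⟨tspan i0 i1 spq.1 spq.2.1 spq.2.2, htspM _ _ _⟩ with htv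
  set Xf : Finset (BVtx n) := Finset.univ.image xv with hXf
  set Tf : Finset (BVtx n) := Finset.univ.image tv with hTf
  have hXrank : ∀ z ∈ Xf, Module.finrank F2 z.1 = n := by
    rintro z hz
    obtain ⟨s, -, rfl⟩ := Finset.mem_image.mp hz
    exact finrank_lagr s
  have hTrank : ∀ z ∈ Tf, Module.finrank F2 z.1 = 2 := by
    rintro z hz
    obtain ⟨spq, -, rfl⟩ := Finset.mem_image.mp hz
    exact finrank_tspan h01 _ _ _
  have hdisj : ∀ z ∈ Xf, z ∉ Tf := by
    intro z hzX hzT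
    have e1 := hXrank z hzX
    have e2 := hTrank z hzT
    omega
  have hXcard : Xf.card = 2 ^ s2 := by
    rw [hXf, Finset.card_image_of_injective _
      (fun s s' h => lagr_injective (congrArg Subtype.val h)), Finset.card_univ,
      Fintype.card_fun, hcard2]
  -- edge lower bound
  set S := (Xf ×ˢ Tf).filter (fun zw => BAdj zw.1 zw.2) with hS
  have hadj : ∀ s p q, BAdj (xv s) (tv (s, p, q)) := by
    intro s p q
    right
    refine ⟨⟨tspan_isotropic s p q, finrank_tspan h01 s p q⟩,
      ⟨lagr_isotropic s, finrank_lagr s⟩, ?_⟩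
    refine lt_of_le_of_ne (tspan_le i0 i1 s p q) ?_
    intro h
    have h' : tspan i0 i1 s p q = lagr s := h
    have h2 := finrank_tspan h01 s p q
    rw [h', finrank_lagr] at h2
    omega
  have hScard : 2 ^ (s2 + (a + 7) + (a + 7)) ≤ S.card := by
    have hmaps : ∀ spq ∈ (Finset.univ : Finset ((Sym2 (Fin n) → F2) ×
        ({i : Fin n // i ≠ i0 ∧ i ≠ i1} → F2) × ({i : Fin n // i ≠ i0 ∧ i ≠ i1} → F2))),
        (xv spq.1, tv spq) ∈ S := by
      rintro ⟨s, p, q⟩ -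
      rw [hS, Finset.mem_filter, Finset.mem_product]
      exact ⟨⟨Finset.mem_image_of_mem xv (Finset.mem_univ s),
        Finset.mem_image_of_mem tv (Finset.mem_univ (s, p, q))⟩, hadj s p q⟩
    have hinj : Set.InjOn (fun spq : (Sym2 (Fin n) → F2) ×
        ({i : Fin n // i ≠ i0 ∧ i ≠ i1} → F2) × ({i : Fin n // i ≠ i0 ∧ i ≠ i1} → F2) =>
        (xv spq.1, tv spq)) ↑(Finset.univ : Finset ((Sym2 (Fin n) → F2) ×
        ({i : Fin n // i ≠ i0 ∧ i ≠ i1} → F2) × ({i : Fin n // i ≠ i0 ∧ i ≠ i1} → F2))) := by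
      rintro ⟨s, p, q⟩ - ⟨s', p', q'⟩ - heq
      rw [Prod.mk.injEq] at heq
      obtain ⟨h1, h2⟩ := heq
      have hs : s = s' := lagr_injective (congrArg Subtype.val h1)
      subst hs
      have ht := congrArg Subtype.val h2
      obtain ⟨hp, hq⟩ := tspan_inj h01 ht
      have hp' : p = p' := hp
      have hq' : q = q' := hq
      rw [hp', hq']
    calc 2 ^ (s2 + (a + 7) + (a + 7))
        = Fintype.card ((Sym2 (Fin n) → F2) ×
          ({i : Fin n // i ≠ i0 ∧ i ≠ i1} → F2) × ({i : Fin n // i ≠ i0 ∧ i ≠ i1} → F2)) := by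
          simp only [Fintype.card_prod, Fintype.card_fun, hcard2, hcIdx, ← hs2def]
          simp only [pow_add]
          ring
    _ = (Finset.univ : Finset _).card := Finset.card_univ.symm
    _ ≤ S.card := Finset.card_le_card_of_injOn _ hmaps hinj
  -- Tf upper bound
  have hTcard : Tf.card ≤ 2 ^ ((a + 7) + (a + 7) + n + n) := by
    set φ : BVtx n → ({i : Fin n // i ≠ i0 ∧ i ≠ i1} → F2) ×
        ({i : Fin n // i ≠ i0 ∧ i ≠ i1} → F2) × (Fin n → F2) × (Fin n → F2) := fun z =>
      if h : ∃ spq, tv spq = z then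
        (h.choose.2.1, h.choose.2.2,
          (symMat h.choose.1).mulVec (u1 i0 i1 h.choose.2.1),
          (symMat h.choose.1).mulVec (u2 i0 i1 h.choose.2.2))
      else default with hφ
    have hspan : ∀ z ∈ Tf, z.1 = Submodule.span F2
        {((u1 i0 i1 (φ z).1, (φ z).2.2.1) : PV n), (u2 i0 i1 (φ z).2.1, (φ z).2.2.2)} := by
      intro z hz
      obtain ⟨spq, -, rfl⟩ := Finset.mem_image.mp hz
      have hex : ∃ spq', tv spq' = tv spq := ⟨spq, rfl⟩
      have hps : φ (tv spq) = (hex.choose.2.1, hex.choose.2.2,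
          (symMat hex.choose.1).mulVec (u1 i0 i1 hex.choose.2.1),
          (symMat hex.choose.1).mulVec (u2 i0 i1 hex.choose.2.2)) := by
        rw [hφ]; exact dif_pos hex
      have hval : (tv hex.choose).1 = (tv spq).1 := congrArg Subtype.val hex.choose_spec
      rw [hps, ← hval]
      rfl
    have h1 : Tf.card ≤ (Finset.univ : Finset (({i : Fin n // i ≠ i0 ∧ i ≠ i1} → F2) ×
        ({i : Fin n // i ≠ i0 ∧ i ≠ i1} → F2) × (Fin n → F2) × (Fin n → F2))).card := by
      refine Finset.card_le_card_of_injOn φ (fun z _ => Finset.mem_univ _) ?_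
      intro z hz z' hz' heq
      refine Subtype.ext ?_
      rw [hspan z hz, hspan z' hz', heq]
    rw [Finset.card_univ] at h1
    refine h1.trans (le_of_eq ?_)
    simp only [Fintype.card_prod, Fintype.card_fun, hcard2, hcIdx, Fintype.card_fin]
    simp only [pow_add]
    ring
  -- Rayleigh quotient argument
  have hBcomm : ∀ x y : BVtx n, BAdj x y ↔ BAdj y x := fun x y => or_comm
  have hHerm : (adjB n).IsHermitian := by
    show (adjB n).conjTranspose = adjB n
    ext i j
    rw [Matrix.conjTranspose_apply]
    show star ((adjB n) j i) = (adjB n) i j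
    rw [star_trivial]
    by_cases h : BAdj i j
    · have h' : BAdj j i := (hBcomm i j).mp h
      simp [adjB, adjMat, h, h']
    · have h' : ¬ BAdj j i := fun hji => h ((hBcomm j i).mp hji)
      simp [adjB, adjMat, h, h']
  have hNE : Nonempty (BVtx n) := ⟨xv (fun _ => 0)⟩
  set vv : BVtx n → ℝ := fun z => if z ∈ Xf then 1 else if z ∈ Tf then (2:ℝ)^k else 0 with hvv
  have hvnn : ∀ z, 0 ≤ vv z := by
    intro z
    rw [hvv]
    dsimp only
    split
    · norm_num
    · split
      · positivity
      · norm_num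
  have hvX : ∀ z ∈ Xf, vv z = 1 := by
    intro z hz
    rw [hvv]
    simp [hz]
  have hvT : ∀ z ∈ Tf, vv z = (2:ℝ)^k := by
    intro z hz
    have hzX : z ∉ Xf := fun hzX => hdisj z hzX hz
    rw [hvv]
    simp [hz, hzX]
  have hray := rayleigh_le_maxEig (adjB n) hHerm vv
  -- expand the quadratic form as a sum over pairs
  have hexpand : ∑ i, vv i * (adjB n).mulVec vv i
      = ∑ p : BVtx n × BVtx n, vv p.1 * ((adjB n) p.1 p.2 * vv p.2) := by
    rw [Fintype.sum_prod_type]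
    refine Finset.sum_congr rfl fun i _ => ?_
    simp [Matrix.mulVec, dotProduct, Finset.mul_sum]
  set S' := S.image Prod.swap with hS'
  have hSfst : ∀ p ∈ S, p.1 ∈ Xf ∧ p.2 ∈ Tf ∧ BAdj p.1 p.2 := by
    intro p hp
    rw [hS, Finset.mem_filter, Finset.mem_product] at hp
    exact ⟨hp.1.1, hp.1.2, hp.2⟩
  have hSS' : Disjoint S S' := by
    rw [Finset.disjoint_left]
    intro p hp hp'
    obtain ⟨q, hq, hqp⟩ := Finset.mem_image.mp hp'
    have h1 : p.1 ∈ Xf := (hSfst p hp).1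
    have h2 : q.2 ∈ Tf := (hSfst q hq).2.1
    rw [← hqp] at h1
    exact hdisj q.2 h1 h2
  have hterm : ∀ p ∈ S, vv p.1 * ((adjB n) p.1 p.2 * vv p.2) = (2:ℝ)^k := by
    intro p hp
    obtain ⟨h1, h2, h3⟩ := hSfst p hp
    rw [hvX p.1 h1, hvT p.2 h2]
    simp [adjB, adjMat, h3]
  have hterm' : ∀ p ∈ S', vv p.1 * ((adjB n) p.1 p.2 * vv p.2) = (2:ℝ)^k := by
    intro p hp
    obtain ⟨q, hq, rfl⟩ := Finset.mem_image.mp hp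
    obtain ⟨h1, h2, h3⟩ := hSfst q hq
    show vv q.2 * ((adjB n) q.2 q.1 * vv q.1) = _
    rw [hvX q.1 h1, hvT q.2 h2]
    have h3' : BAdj q.2 q.1 := (hBcomm q.1 q.2).mp h3
    simp [adjB, adjMat, h3']
  have hAnn : ∀ p : BVtx n × BVtx n, 0 ≤ vv p.1 * ((adjB n) p.1 p.2 * vv p.2) := by
    intro p
    refine mul_nonneg (hvnn _) (mul_nonneg ?_ (hvnn _))
    show (0:ℝ) ≤ if BAdj p.1 p.2 then 1 else 0
    split <;> norm_num
  have hlowsum : (S.card : ℝ) * (2:ℝ)^k * 2 ≤ ∑ i, vv i * (adjB n).mulVec vv i := by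
    rw [hexpand]
    calc (S.card : ℝ) * (2:ℝ)^k * 2
        = ∑ p ∈ S ∪ S', vv p.1 * ((adjB n) p.1 p.2 * vv p.2) := by
          rw [Finset.sum_union hSS', Finset.sum_congr rfl hterm, Finset.sum_congr rfl hterm',
            Finset.sum_const, Finset.sum_const, hS',
            Finset.card_image_of_injective _ Prod.swap_injective, nsmul_eq_mul]
          ring
    _ ≤ ∑ p : BVtx n × BVtx n, vv p.1 * ((adjB n) p.1 p.2 * vv p.2) :=
          Finset.sum_le_sum_of_subset_of_nonneg (Finset.subset_univ _)
            (fun p _ _ => hAnn p)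
  have hupsum : ∑ i, vv i * vv i ≤ (Xf.card : ℝ) + (Tf.card : ℝ) * ((2:ℝ)^k * (2:ℝ)^k) := by
    have hb : ∀ z, vv z * vv z ≤ (if z ∈ Xf then (1:ℝ) else 0)
        + (if z ∈ Tf then (2:ℝ)^k * (2:ℝ)^k else 0) := by
      intro z
      have hnn2 : (0:ℝ) ≤ (if z ∈ Tf then (2:ℝ)^k * (2:ℝ)^k else 0) := by
        split
        · positivity
        · norm_num
      by_cases h1 : z ∈ Xf
      · rw [hvX z h1, if_pos h1]
        nlinarith
      · by_cases h2 : z ∈ Tf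
        · rw [hvT z h2, if_neg h1, if_pos h2]
          norm_num
        · rw [hvv]
          simp [h1, h2]
    calc ∑ i, vv i * vv i
        ≤ ∑ z, ((if z ∈ Xf then (1:ℝ) else 0) + (if z ∈ Tf then (2:ℝ)^k * (2:ℝ)^k else 0)) :=
          Finset.sum_le_sum (fun i _ => hb i)
    _ = (Xf.card : ℝ) + (Tf.card : ℝ) * ((2:ℝ)^k * (2:ℝ)^k) := by
          rw [Finset.sum_add_distrib, Finset.sum_ite_mem, Finset.sum_ite_mem,
            Finset.univ_inter, Finset.univ_inter, Finset.sum_const, Finset.sum_const,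
            nsmul_eq_mul, mul_one]
          simp [nsmul_eq_mul]
  -- numeric bounds
  have hLlow : (2:ℝ) ^ (k + (s2 + (a + 7) + (a + 7)) + 1) ≤ (S.card : ℝ) * (2:ℝ)^k * 2 := by
    have hc : (2:ℝ) ^ (s2 + (a + 7) + (a + 7)) ≤ (S.card : ℝ) := by
      have := hScard
      calc (2:ℝ) ^ (s2 + (a + 7) + (a + 7)) = ((2 ^ (s2 + (a + 7) + (a + 7)) : ℕ) : ℝ) := by
            push_cast; ring
      _ ≤ (S.card : ℝ) := Nat.cast_le.mpr hScard
    calc (2:ℝ) ^ (k + (s2 + (a + 7) + (a + 7)) + 1)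
        = (2:ℝ) ^ (s2 + (a + 7) + (a + 7)) * (2:ℝ)^k * 2 := by
          rw [pow_add, pow_add, pow_one]
          ring
    _ ≤ (S.card : ℝ) * (2:ℝ)^k * 2 := by
          have h2k : (0:ℝ) < (2:ℝ)^k := by positivity
          nlinarith
  have hYup : ∑ i, vv i * vv i ≤ (2:ℝ) ^ (s2 + 2) := by
    refine hupsum.trans ?_
    have hX : (Xf.card : ℝ) = (2:ℝ) ^ s2 := by
      rw [hXcard]; push_cast; ring
    have hT : (Tf.card : ℝ) ≤ (2:ℝ) ^ ((a + 7) + (a + 7) + n + n) := by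
      calc (Tf.card : ℝ) ≤ ((2 ^ ((a + 7) + (a + 7) + n + n) : ℕ) : ℝ) := Nat.cast_le.mpr hTcard
      _ = (2:ℝ) ^ ((a + 7) + (a + 7) + n + n) := by push_cast; ring
    have hstep : (Tf.card : ℝ) * ((2:ℝ)^k * (2:ℝ)^k) ≤ (2:ℝ) ^ (s2 + 1) := by
      have hm : (2:ℝ) ^ ((a + 7) + (a + 7) + n + n) * ((2:ℝ)^k * (2:ℝ)^k)
          = (2:ℝ) ^ ((a + 7) + (a + 7) + n + n + k + k) := by
        simp only [pow_add]; ring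
      have hkk : (0:ℝ) ≤ (2:ℝ)^k * (2:ℝ)^k := by positivity
      calc (Tf.card : ℝ) * ((2:ℝ)^k * (2:ℝ)^k)
          ≤ (2:ℝ) ^ ((a + 7) + (a + 7) + n + n) * ((2:ℝ)^k * (2:ℝ)^k) :=
            mul_le_mul_of_nonneg_right hT hkk
      _ = (2:ℝ) ^ ((a + 7) + (a + 7) + n + n + k + k) := hm
      _ ≤ (2:ℝ) ^ (s2 + 1) := by
            refine pow_le_pow_right₀ one_le_two ?_
            omega
    calc (Xf.card : ℝ) + (Tf.card : ℝ) * ((2:ℝ)^k * (2:ℝ)^k)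
        ≤ (2:ℝ) ^ s2 + (2:ℝ) ^ (s2 + 1) := by
          rw [hX]
          linarith
    _ ≤ (2:ℝ) ^ (s2 + 2) := by
          rw [pow_add, pow_add]
          norm_num
          nlinarith [pow_pos (show (0:ℝ) < 2 by norm_num) s2]
  -- conclude
  set M := maxEig (adjB n) with hM
  have hkey : (2:ℝ) ^ (k + (s2 + (a + 7) + (a + 7)) + 1) ≤ M * (2:ℝ) ^ (s2 + 2) := by
    have hY0 : (0:ℝ) ≤ ∑ i, vv i * vv i := Finset.sum_nonneg fun i _ => mul_self_nonneg _
    have hMY : (2:ℝ) ^ (k + (s2 + (a + 7) + (a + 7)) + 1) ≤ M * ∑ i, vv i * vv i :=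
      le_trans hLlow (le_trans hlowsum hray)
    have hM0 : 0 ≤ M := by
      by_contra hneg
      push_neg at hneg
      have : M * ∑ i, vv i * vv i ≤ 0 := mul_nonpos_of_nonpos_of_nonneg (le_of_lt hneg) hY0
      have h2p : (0:ℝ) < (2:ℝ) ^ (k + (s2 + (a + 7) + (a + 7)) + 1) := by positivity
      linarith
    calc (2:ℝ) ^ (k + (s2 + (a + 7) + (a + 7)) + 1) ≤ M * ∑ i, vv i * vv i := hMY
    _ ≤ M * (2:ℝ) ^ (s2 + 2) := mul_le_mul_of_nonneg_left hYup hM0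
  have hM0' : 0 ≤ M := by
    have h2p : (0:ℝ) < (2:ℝ) ^ (k + (s2 + (a + 7) + (a + 7)) + 1) := by positivity
    have h2q : (0:ℝ) < (2:ℝ) ^ (s2 + 2) := by positivity
    nlinarith
  set e1 := k + (s2 + (a + 7) + (a + 7)) + 1 with he1
  have hsq : (2:ℝ) ^ (e1 + e1) ≤ M ^ 2 * (2:ℝ) ^ ((s2 + 2) + (s2 + 2)) := by
    have := mul_le_mul hkey hkey (by positivity) (by positivity)
    calc (2:ℝ) ^ (e1 + e1) = (2:ℝ) ^ e1 * (2:ℝ) ^ e1 := by rw [pow_add]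
    _ ≤ (M * (2:ℝ) ^ (s2 + 2)) * (M * (2:ℝ) ^ (s2 + 2)) := this
    _ = M ^ 2 * ((2:ℝ) ^ (s2 + 2) * (2:ℝ) ^ (s2 + 2)) := by ring
    _ = M ^ 2 * (2:ℝ) ^ ((s2 + 2) + (s2 + 2)) := by simp only [pow_add]; try ring
  have hfin : (2:ℝ) ^ (t' + ((s2 + 2) + (s2 + 2))) ≤ M ^ 2 * (2:ℝ) ^ ((s2 + 2) + (s2 + 2)) := by
    refine le_trans (pow_le_pow_right₀ one_le_two ?_) hsq
    omega
  rw [ge_iff_le]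
  have h2Z : (0:ℝ) < (2:ℝ) ^ ((s2 + 2) + (s2 + 2)) := by positivity
  rw [pow_add] at hfin
  exact le_of_mul_le_mul_right hfin h2Z
end

section
/- Let S₁, S₂ be isotropic subspaces of (ZMod 2)^{2n} and let f₁, f₂ be outcomes of S₁ and S₂ respectively. If f₁ and f₂ are inconsistent, i.e. there exists v ∈ S₁ ∩ S₂ with f₁(v) ≠ f₂(v), then |{v ∈ S₁ ∩ S₂ : f₁(v) ≠ f₂(v)}| = 2^{dim(S₁∩S₂) − 1}: the two outcomes disagree on exactly half of the intersection. -/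
open Finset

lemma F2_ne_imp_add_one (a b : F2) (h : a ≠ b) : a + b = 1 := by revert h; revert a b; decide

lemma F2_add_one_imp_ne (a b : F2) (h : a + b = 1) : a ≠ b := by revert h; revert a b; decide

lemma F2_add_zero_imp_eq (a b : F2) (h : a + b = 0) : a = b := by revert h; revert a b; decide

lemma F2_not_zero (a : F2) (h : a ≠ 0) : a = 1 := by revert h; revert a; decide

lemma F2_not_one (a : F2) (h : a ≠ 1) : a = 0 := by revert h; revert a; decide

/-- **Disagreement on exactly half.** If outcomes `f₁, f₂` of isotropic subspaces `S₁, S₂`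
are inconsistent, then they disagree on exactly `2^{dim(S₁∩S₂)−1}` vectors of `S₁ ∩ S₂`. -/
theorem inconsistent_outcomes_disagree_on_half :
    ∀ n : ℕ, ∀ S₁ S₂ : Submodule F2 (PV n), IsIsotropic S₁ → IsIsotropic S₂ →
      ∀ (f₁ : S₁ → F2) (f₂ : S₂ → F2), IsOutcome S₁ f₁ → IsOutcome S₂ f₂ →
        (∃ v, ∃ (h1 : v ∈ S₁) (h2 : v ∈ S₂), f₁ ⟨v, h1⟩ ≠ f₂ ⟨v, h2⟩) →
        Nat.card {v : PV n | ∃ (h1 : v ∈ S₁) (h2 : v ∈ S₂), f₁ ⟨v, h1⟩ ≠ f₂ ⟨v, h2⟩} =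
          2 ^ (Module.finrank F2 ↥(S₁ ⊓ S₂) - 1) := by
  intro n S₁ S₂ hS₁ hS₂ f₁ f₂ hf₁ hf₂ hex
  classical
  obtain ⟨v₀, h1₀, h2₀, hne₀⟩ := hex
  set M := S₁ ⊓ S₂ with hM
  let g : M → F2 := fun x => f₁ ⟨x.1, x.2.1⟩ + f₂ ⟨x.1, x.2.2⟩
  have hadd : ∀ x y : M, g (x + y) = g x + g y := by
    intro x y
    have e1 : f₁ ⟨(x + y : M).1, (x + y).2.1⟩
        = f₁ ⟨x.1, x.2.1⟩ + f₁ ⟨y.1, y.2.1⟩ + wght (x : PV n) (y : PV n) := by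
      have := hf₁ ⟨x.1, x.2.1⟩ ⟨y.1, y.2.1⟩
      convert this using 2
      rfl
    have e2 : f₂ ⟨(x + y : M).1, (x + y).2.2⟩
        = f₂ ⟨x.1, x.2.2⟩ + f₂ ⟨y.1, y.2.2⟩ + wght (x : PV n) (y : PV n) := by
      have := hf₂ ⟨x.1, x.2.2⟩ ⟨y.1, y.2.2⟩
      convert this using 2
      rfl
    show f₁ _ + f₂ _ = _
    rw [e1, e2]
    ring_nf
    rw [show (2 : F2) = 0 by decide]
    ring
  have hg0 : g 0 = 0 := by
    have := hadd 0 0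
    simpa using this.symm
  let v₀' : M := ⟨v₀, h1₀, h2₀⟩
  have hgv₀ : g v₀' = 1 := F2_ne_imp_add_one _ _ hne₀
  have key : Nat.card {v : PV n | ∃ (h1 : v ∈ S₁) (h2 : v ∈ S₂), f₁ ⟨v, h1⟩ ≠ f₂ ⟨v, h2⟩}
      = Nat.card {x : M | g x = 1} := by
    apply Nat.card_congr
    refine ⟨fun p => ⟨⟨p.1, p.2.choose, p.2.choose_spec.choose⟩,
        F2_ne_imp_add_one _ _ p.2.choose_spec.choose_spec⟩,
      fun q => ⟨q.1.1, q.1.2.1, q.1.2.2, F2_add_one_imp_ne _ _ q.2⟩,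
      fun p => Subtype.ext rfl, fun q => Subtype.ext (Subtype.ext rfl)⟩
  rw [key]
  have : Fintype M := Fintype.ofFinite M
  have hbij : Nat.card {x : M | g x = 1} = Nat.card {x : M | g x = 0} := by
    apply Nat.card_congr
    refine ⟨fun p => ⟨p.1 + v₀', ?_⟩, fun q => ⟨q.1 + v₀', ?_⟩, fun p => ?_, fun q => ?_⟩
    · show g _ = 0
      rw [hadd, p.2, hgv₀]; decide
    · show g _ = 1
      rw [hadd, q.2, hgv₀]; decide
    · apply Subtype.ext
      show (p.1 : M) + v₀' + v₀' = p.1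
      rw [add_assoc, ← two_smul F2 v₀', show (2:F2) = 0 by decide, zero_smul, add_zero]
    · apply Subtype.ext
      show (q.1 : M) + v₀' + v₀' = q.1
      rw [add_assoc, ← two_smul F2 v₀', show (2:F2) = 0 by decide, zero_smul, add_zero]
  have hsum : Nat.card {x : M | g x = 1} + Nat.card {x : M | g x = 0} = Nat.card M := by
    rw [Nat.card_eq_fintype_card, Nat.card_eq_fintype_card, Nat.card_eq_fintype_card]
    have hc : Fintype.card {x : M | g x = 0} = Fintype.card {x : M // ¬ g x = 1} := by
      apply Fintype.card_congr
      apply Equiv.subtypeEquivRight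
      intro x
      constructor
      · intro h h1
        have h0 : g x = 0 := h
        rw [h1] at h0
        exact absurd h0 (by decide)
      · exact F2_not_one _
    have hc1 : Fintype.card {x : M | g x = 1} = Fintype.card {x : M // g x = 1} :=
      Fintype.card_congr (Equiv.subtypeEquivRight fun x => Iff.rfl)
    have hle : Fintype.card {x : M // g x = 1} ≤ Fintype.card M := Fintype.card_subtype_le _
    rw [hc, hc1, Fintype.card_subtype_compl]
    omega
  have hcardM : Nat.card M = 2 ^ Module.finrank F2 M := by
    rw [Nat.card_eq_fintype_card]
    have := Module.card_eq_pow_finrank (K := F2) (V := M)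
    rwa [show Fintype.card F2 = 2 from rfl] at this
  have hd : 1 ≤ Module.finrank F2 M := by
    by_contra h
    push_neg at h
    have hdd : Module.finrank F2 M = 0 := by omega
    rw [hdd, pow_zero] at hcardM
    have h0 : (0 : M) ≠ v₀' := by
      intro h
      rw [← h, hg0] at hgv₀
      exact absurd hgv₀ (by decide)
    have h2 : 2 ≤ Nat.card M := by
      rw [Nat.card_eq_fintype_card]
      exact Fintype.one_lt_card_iff.mpr ⟨0, v₀', h0⟩
    omega
  rw [hbij] at hsum ⊢
  have h2 : 2 ^ Module.finrank F2 M = 2 * 2 ^ (Module.finrank F2 M - 1) := by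
    rw [← pow_succ']
    congr 1
    omega
  omega
end
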